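/- arXiv:2406.11998 — 5 statements merged into one kernel-verified Lean document; each statement's English description precedes it below -/
import Mathlib

section
/- A path complex P on a finite set V with P_0 = V is generated by a simplicial complex — i.e., there exist an abstract simplicial complex S on V and an injective function f : V → ℝ such that P = { i_0…i_n : {i_0,…,i_n} ∈ S and f(i_0) < f(i_1) < … < f(i_n) } — if and only if P is perfect and monotonic. -/
/-!
STATEMENT 4: A path complex P on a finite set V with P₀ = V is generated by a simplicial
complex — i.e. there are an abstract simplicial complex S on V and an injective
f : V → ℝ with P = { i₀…iₙ : {i₀,…,iₙ} ∈ S and f(i₀) < … < f(iₙ) } — iff P is perfect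
and monotonic.

Elementary paths are non-empty lists of vertices; a path complex is a set of non-empty
lists closed under dropping the first or the last vertex.  An abstract simplicial complex
on V is a collection of non-empty finite subsets of V closed under non-empty subsets and
containing all singletons.  P is perfect if every non-empty subsequence (`List.Sublist`)
of an allowed path is allowed; P is monotonic if some real-valued function on V is
strictly increasing along every allowed path.
-/

namespace PH

structure PathComplex (V : Type) where
  carrier : Set (List V)
  not_nil : ∀ p ∈ carrier, p ≠ []
  dropLast_mem : ∀ p ∈ carrier, 2 ≤ p.length → p.dropLast ∈ carrier
  tail_mem : ∀ p ∈ carrier, 2 ≤ p.length → p.tail ∈ carrier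

end PH

theorem statement4 (V : Type) [Fintype V] [DecidableEq V] (P : PH.PathComplex V)
    -- P₀ = V
    (h0 : ∀ v : V, [v] ∈ P.carrier) :
    -- P is generated by an abstract simplicial complex S on V via an injective f : V → ℝ …
    (∃ (S : Set (Finset V)) (f : V → ℝ),
        (∀ s ∈ S, s.Nonempty) ∧
        (∀ s ∈ S, ∀ t : Finset V, t ⊆ s → t.Nonempty → t ∈ S) ∧
        (∀ v : V, {v} ∈ S) ∧
        Function.Injective f ∧
        P.carrier = {l : List V | l ≠ [] ∧ l.toFinset ∈ S ∧
          l.Chain' (fun a b => f a < f b)}) ↔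
    -- … iff P is perfect and monotonic
    ((∀ p ∈ P.carrier, ∀ q : List V, q.Sublist p → q ≠ [] → q ∈ P.carrier) ∧
     (∃ f : V → ℝ, ∀ p ∈ P.carrier, p.Chain' (fun a b => f a < f b))) := by
  constructor
  · rintro ⟨S, f, hne, hdown, hsing, hinj, hP⟩
    haveI : IsTrans V (fun a b => f a < f b) := ⟨fun _ _ _ h1 h2 => lt_trans h1 h2⟩
    constructor
    · intro p hp q hq hq0
      rw [hP] at hp ⊢
      obtain ⟨hp0, hpS, hpc⟩ := hp
      refine ⟨hq0, ?_, hpc.sublist hq⟩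
      refine hdown _ hpS _ ?_ ?_
      · intro x hx
        rw [List.mem_toFinset] at hx ⊢
        exact hq.subset hx
      · obtain ⟨a, t, rfl⟩ := List.exists_cons_of_ne_nil hq0
        exact ⟨a, by simp⟩
    · refine ⟨f, fun p hp => ?_⟩
      rw [hP] at hp
      exact hp.2.2
  · rintro ⟨hperf, f₀, hmono⟩
    -- build an injective refinement f of f₀
    let e := Fintype.equivFin V
    have ginj : Function.Injective (fun v : V => toLex ((f₀ v, e v) : ℝ × Fin (Fintype.card V))) := by
      intro a b hab
      have : (f₀ a, e a) = (f₀ b, e b) := by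
        exact toLex.injective hab
      exact e.injective (congrArg Prod.snd this)
    letI L : LinearOrder V := LinearOrder.lift' _ ginj
    let φ := (monoEquivOfFin V rfl).symm
    set f : V → ℝ := fun v => ((φ v : ℕ) : ℝ) with hf
    have finj : Function.Injective f := by
      intro a b hab
      have : ((φ a : ℕ) : ℝ) = ((φ b : ℕ) : ℝ) := hab
      exact φ.injective (Fin.val_injective (Nat.cast_injective this))
    have hstep : ∀ a b : V, f₀ a < f₀ b → f a < f b := by
      intro a b h
      have hlt : a < b := by
        change toLex ((f₀ a, e a) : ℝ × Fin _) < toLex ((f₀ b, e b) : ℝ × Fin _)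
        exact Prod.Lex.left _ _ h
      have : φ a < φ b := φ.strictMono hlt
      simp only [hf]
      exact_mod_cast this
    have hchainf : ∀ p ∈ P.carrier, p.Chain' (fun a b => f a < f b) := by
      intro p hp
      exact (hmono p hp).imp (fun {a b} h => hstep a b h)
    haveI : IsTrans V (fun a b => f a < f b) := ⟨fun _ _ _ h1 h2 => lt_trans h1 h2⟩
    haveI : IsAntisymm V (fun a b => f a < f b) :=
      ⟨fun _ _ h1 h2 => absurd (lt_trans h1 h2) (lt_irrefl _)⟩
    have hnodup : ∀ p ∈ P.carrier, p.Nodup := by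
      intro p hp
      have := (List.isChain_iff_pairwise.mp (hchainf p hp))
      exact this.imp (fun h => ne_of_apply_ne f (ne_of_lt h))
    refine ⟨List.toFinset '' P.carrier, f, ?_, ?_, ?_, finj, ?_⟩
    · rintro s ⟨p, hp, rfl⟩
      obtain ⟨a, t, rfl⟩ := List.exists_cons_of_ne_nil (P.not_nil p hp)
      exact ⟨a, by simp⟩
    · rintro s ⟨p, hp, rfl⟩ t hts ⟨a, ha⟩
      refine ⟨p.filter (· ∈ t), hperf p hp _ (List.filter_sublist (l := p)) ?_, ?_⟩
      · have hap : a ∈ p := List.mem_toFinset.mp (hts ha)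
        have : a ∈ p.filter (· ∈ t) := by
          rw [List.mem_filter]
          exact ⟨hap, by simpa using ha⟩
        exact List.ne_nil_of_mem this
      · ext x
        simp only [List.mem_toFinset, List.mem_filter, decide_eq_true_eq]
        constructor
        · rintro ⟨_, hx⟩; exact hx
        · intro hx; exact ⟨List.mem_toFinset.mp (hts hx), hx⟩
    · intro v
      exact ⟨[v], h0 v, by simp⟩
    · ext l
      constructor
      · intro hl
        exact ⟨P.not_nil l hl, ⟨l, hl, rfl⟩, hchainf l hl⟩
      · rintro ⟨hl0, ⟨p, hp, hpt⟩, hlc⟩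
        have hlnd : l.Nodup :=
          (List.isChain_iff_pairwise.mp hlc).imp (fun h => ne_of_apply_ne f (ne_of_lt h))
        have hpnd : p.Nodup := hnodup p hp
        have hperm : l.Perm p := by
          have := List.toFinset_eq_iff_perm_dedup.mp hpt.symm
          rwa [hlnd.dedup, hpnd.dedup] at this
        have : l = p := by
          refine List.Perm.eq_of_pairwise' (r := fun a b => f a < f b) ?_ ?_ hperm
          · exact List.isChain_iff_pairwise.mp hlc
          · exact List.isChain_iff_pairwise.mp (hchainf p hp)
        rw [this]; exact hp
end

section
/- Let G and G' be digraphs and f : G → G' a digraph map. Then the induced map on regular chains restricts to the ∂-invariant chains, i.e. f_*(Ω_n(G)) ⊆ Ω_n(G') for every n, giving a chain map f_* : Ω_*(G) → Ω_*(G') (∂∘f_* = f_*∘∂), and hence f induces group homomorphisms f_* : H_n(G) → H_n(G') on path homology for every n. -/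
/-!
STATEMENT 6: Let G and G' be digraphs and f : G → G' a digraph map.  Then the induced
map on regular chains restricts to the ∂-invariant chains, f_*(Ω_n(G)) ⊆ Ω_n(G') for
every n, giving a chain map f_* : Ω_*(G) → Ω_*(G') (∂∘f_* = f_*∘∂), and hence f induces
group homomorphisms f_* : H_n(G) → H_n(G') on path homology for every n.

The induced homology homomorphism is characterized on classes of cycles:
h([z]) = [f_* z].
-/

open scoped Classical

namespace PH

/-- An elementary path (a list of vertices) is regular if no two consecutive
vertices coincide. -/
def Reg {V : Type} (l : List V) : Prop := l.Chain' (· ≠ ·)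

/-- The regular boundary operator ∂ on the span of regular paths (all degrees at once,
with the convention that ∂ vanishes on 0-paths): on a basis path `p` of length ≥ 2 it is
the alternating sum of the vertex deletions, with non-regular terms replaced by 0. -/
noncomputable def dReg (K : Type) [Field K] (V : Type) :
    (List V →₀ K) →ₗ[K] (List V →₀ K) :=
  Finsupp.lsum K fun p => LinearMap.toSpanSingleton K (List V →₀ K)
    (if 2 ≤ p.length then
      ∑ q : Fin p.length, ((-1 : K) ^ (q : ℕ)) •
        (if Reg (p.eraseIdx (q : ℕ)) then Finsupp.single (p.eraseIdx (q : ℕ)) (1 : K) else 0)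
    else 0)

/-- The map induced on regular chains by a vertex map f:
`e_{i₀…iₙ} ↦ e_{f(i₀)…f(iₙ)}` if the image path is regular, and 0 otherwise. -/
noncomputable def find (K : Type) [Field K] {V W : Type} (f : V → W) :
    (List V →₀ K) →ₗ[K] (List W →₀ K) :=
  Finsupp.lsum K fun p => LinearMap.toSpanSingleton K (List W →₀ K)
    (if Reg (p.map f) then Finsupp.single (p.map f) (1 : K) else 0)

/-- `A_n(P)`: the span of the regular allowed n-paths (lists of n+1 vertices in P). -/
def Asub (K : Type) [Field K] {V : Type} (P : Set (List V)) (n : ℕ) :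
    Submodule K (List V →₀ K) :=
  Finsupp.supported K K {l | l ∈ P ∧ l.length = n + 1 ∧ Reg l}

/-- `Ω_n(P)`: the ∂-invariant allowed regular n-chains. -/
noncomputable def OmegaSub (K : Type) [Field K] {V : Type} (P : Set (List V)) (n : ℕ) :
    Submodule K (List V →₀ K) :=
  Asub K P n ⊓ Submodule.comap (dReg K V) (Asub K P (n - 1))

/-- The n-cycles of Ω_*(P). -/
noncomputable def Zsub (K : Type) [Field K] {V : Type} (P : Set (List V)) (n : ℕ) :
    Submodule K (List V →₀ K) :=
  OmegaSub K P n ⊓ LinearMap.ker (dReg K V)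

/-- The n-boundaries ∂Ω_{n+1}(P). -/
noncomputable def Bsub (K : Type) [Field K] {V : Type} (P : Set (List V)) (n : ℕ) :
    Submodule K (List V →₀ K) :=
  Submodule.map (dReg K V) (OmegaSub K P (n + 1))

/-- Path homology `H_n(P)`, realized as the image of the n-cycles in the quotient of the
ambient space by the n-boundaries (so `H_n(P) ≅ Z_n/(Z_n ∩ B_n) = Z_n/B_n`). -/
noncomputable def Hsm (K : Type) [Field K] {V : Type} (P : Set (List V)) (n : ℕ) :
    Submodule K ((List V →₀ K) ⧸ Bsub K P n) :=
  Submodule.map (Bsub K P n).mkQ (Zsub K P n)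

end PH

namespace PH

/-- A digraph: an edge relation without self-loops on a vertex type. -/
structure Digraph' (V : Type) where
  edge : V → V → Prop
  loopless : ∀ v : V, ¬ edge v v

/-- The elementary paths of the path complex P(G) generated by a digraph G. -/
def pathsOf {V : Type} (G : Digraph' V) : Set (List V) :=
  {l | l ≠ [] ∧ l.Chain' G.edge}

/-- A digraph map: i → j implies f(i) = f(j) or f(i) → f(j). -/
def IsDigraphMap {V W : Type} (G : Digraph' V) (H : Digraph' W) (f : V → W) : Prop :=
  ∀ i j : V, G.edge i j → f i = f j ∨ H.edge (f i) (f j)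

end PH


namespace S6

variable {K : Type} [Field K] {V V' : Type}

lemma map_eraseIdx (f : V → V') : ∀ (l : List V) (k : ℕ),
    (l.eraseIdx k).map f = (l.map f).eraseIdx k
  | [], _ => by simp
  | _ :: _, 0 => by simp
  | a :: l, k + 1 => by
      simp [List.eraseIdx_cons_succ, map_eraseIdx f l k]

lemma chain'_map_ {R : V' → V' → Prop} (f : V → V') {l : List V} :
    List.Chain' R (l.map f) ↔ List.Chain' (fun a b : V => R (f a) (f b)) l := by
  unfold List.Chain'; exact List.isChain_map f

lemma chain'_iff_get_ {α : Type} {R : α → α → Prop} {l : List α} :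
    List.Chain' R l ↔ ∀ (i : ℕ) (h : i < l.length - 1),
      R (l.get ⟨i, by omega⟩) (l.get ⟨i + 1, by omega⟩) := by
  unfold List.Chain'; rw [List.isChain_iff_getElem]
  constructor <;> intro h i hi <;> exact h i (by omega)

lemma reg_of_map {f : V → V'} {l : List V} (h : PH.Reg (l.map f)) : PH.Reg l := by
  rw [PH.Reg, chain'_map_] at h
  exact h.imp fun {a b} hab e => hab (congrArg f e)

lemma exists_dup {α : Type} {l : List α} (h : ¬ PH.Reg l) :
    ∃ j, ∃ hj : j + 1 < l.length, l.get ⟨j, by omega⟩ = l.get ⟨j + 1, hj⟩ := by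
  rw [PH.Reg, chain'_iff_get_] at h
  push_neg at h
  obtain ⟨i, hi, he⟩ := h
  exact ⟨i, by omega, he⟩

lemma eraseIdx_dup {α : Type} : ∀ (l : List α) (j : ℕ) (hj : j + 1 < l.length),
    l.get ⟨j, by omega⟩ = l.get ⟨j + 1, hj⟩ → l.eraseIdx j = l.eraseIdx (j + 1)
  | [], j, hj => by simp at hj
  | [a], j, hj => by simp at hj
  | a :: b :: t, 0, hj => fun he => by
      simp only [List.get_eq_getElem, List.getElem_cons_zero, List.getElem_cons_succ] at he
      simp [he]
  | a :: b :: t, j + 1, hj => fun he => by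
      have ih := eraseIdx_dup (b :: t) j (by simpa using hj) (by simpa using he)
      simp [List.eraseIdx_cons_succ, ih]

lemma not_reg_eraseIdx {α : Type} {l : List α} {j k : ℕ} (hj : j + 1 < l.length)
    (he : l.get ⟨j, by omega⟩ = l.get ⟨j + 1, hj⟩) (hk1 : k ≠ j) (hk2 : k ≠ j + 1) :
    ¬ PH.Reg (l.eraseIdx k) := by
  intro hreg
  rw [PH.Reg, chain'_iff_get_] at hreg
  have hlen : (l.eraseIdx k).length = if k < l.length then l.length - 1 else l.length :=
    List.length_eraseIdx ..
  simp only [List.get_eq_getElem] at he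
  rcases Nat.lt_or_ge k j with h | h
  · obtain ⟨m, rfl⟩ : ∃ m, j = m + 1 := ⟨j - 1, by omega⟩
    have h1 : m < (l.eraseIdx k).length - 1 := by rw [hlen]; split <;> omega
    refine hreg m h1 ?_
    simp only [List.get_eq_getElem, List.getElem_eraseIdx]
    rw [dif_neg (by omega), dif_neg (by omega)]
    exact he
  · have h' : j + 2 ≤ k := by omega
    have h1 : j < (l.eraseIdx k).length - 1 := by rw [hlen]; split <;> omega
    refine hreg j h1 ?_
    simp only [List.get_eq_getElem, List.getElem_eraseIdx]
    rw [dif_pos (by omega), dif_pos (by omega)]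
    exact he

lemma find_single (f : V → V') (p : List V) :
    PH.find K f (Finsupp.single p (1 : K)) =
      if PH.Reg (p.map f) then Finsupp.single (p.map f) (1 : K) else 0 := by
  rw [PH.find, Finsupp.lsum_single, LinearMap.toSpanSingleton_apply, one_smul]

lemma dReg_single (p : List V) :
    PH.dReg K V (Finsupp.single p (1 : K)) =
      if 2 ≤ p.length then
        ∑ k ∈ Finset.range p.length, ((-1 : K) ^ k) •
          (if PH.Reg (p.eraseIdx k) then Finsupp.single (p.eraseIdx k) (1 : K) else 0)
      else 0 := by
  rw [PH.dReg, Finsupp.lsum_single, LinearMap.toSpanSingleton_apply, one_smul]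
  by_cases h : 2 ≤ p.length
  · rw [if_pos h, if_pos h]
    exact Fin.sum_univ_eq_sum_range
      (fun k => ((-1 : K) ^ k) •
        (if PH.Reg (p.eraseIdx k) then Finsupp.single (p.eraseIdx k) (1 : K) else 0)) p.length
  · rw [if_neg h, if_neg h]

lemma cancel_sum {M : Type} [AddCommGroup M] (n j : ℕ) (hj : j + 1 < n)
    (T : ℕ → M)
    (hz : ∀ c < n, c ≠ j → c ≠ j + 1 → T c = 0)
    (hcancel : T j + T (j + 1) = 0) :
    ∑ k ∈ Finset.range n, T k = 0 := by
  rw [Finset.sum_eq_add j (j + 1) (by omega)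
      (fun c hc hcc => hz c (Finset.mem_range.1 hc) hcc.1 hcc.2)
      (fun hnot => absurd (Finset.mem_range.2 (by omega)) hnot)
      (fun hnot => absurd (Finset.mem_range.2 hj) hnot), hcancel]

lemma comm_single (f : V → V') (p : List V) :
    PH.dReg K V' (PH.find K f (Finsupp.single p (1 : K))) =
      PH.find K f (PH.dReg K V (Finsupp.single p (1 : K))) := by
  have hmap : ∀ k : ℕ, PH.find K f
      (((-1 : K) ^ k) • (if PH.Reg (p.eraseIdx k)
          then Finsupp.single (p.eraseIdx k) (1 : K) else 0)) =
      ((-1 : K) ^ k) • (if PH.Reg (p.eraseIdx k) then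
        (if PH.Reg ((p.map f).eraseIdx k) then
          Finsupp.single ((p.map f).eraseIdx k) (1 : K) else 0) else 0) := by
    intro k
    rw [map_smul, apply_ite (PH.find K f), map_zero, find_single, map_eraseIdx]
  rw [find_single, dReg_single]
  by_cases hq : PH.Reg (p.map f)
  · rw [if_pos hq, dReg_single]
    simp only [List.length_map]
    by_cases hl : 2 ≤ p.length
    · rw [if_pos hl, if_pos hl, map_sum]
      refine Finset.sum_congr rfl fun k _ => ?_
      rw [hmap]
      by_cases h : PH.Reg ((p.map f).eraseIdx k)
      · have hp : PH.Reg (p.eraseIdx k) := reg_of_map (by rw [map_eraseIdx]; exact h)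
        rw [if_pos hp]
      · simp [h]
    · rw [if_neg hl, if_neg hl, map_zero]
  · rw [if_neg hq, map_zero]
    by_cases hl : 2 ≤ p.length
    swap
    · rw [if_neg hl, map_zero]
    rw [if_pos hl, map_sum]
    obtain ⟨j, hj, hje⟩ := exists_dup (l := p.map f) hq
    have hjlen : j + 1 < p.length := by simpa using hj
    have heq : (p.map f).eraseIdx j = (p.map f).eraseIdx (j + 1) :=
      eraseIdx_dup (p.map f) j hj hje
    symm
    refine cancel_sum p.length j hjlen _ (fun c _ hc1 hc2 => ?_) ?_
    · rw [hmap c]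
      have hnr : ¬ PH.Reg ((p.map f).eraseIdx c) := not_reg_eraseIdx hj hje hc1 hc2
      simp [hnr]
    · rw [hmap j, hmap (j + 1)]
      by_cases hr : PH.Reg ((p.map f).eraseIdx (j + 1))
      · have hr' : PH.Reg ((p.map f).eraseIdx j) := by rw [heq]; exact hr
        have hp1 : PH.Reg (p.eraseIdx j) := reg_of_map (by rw [map_eraseIdx]; exact hr')
        have hp2 : PH.Reg (p.eraseIdx (j + 1)) := reg_of_map (by rw [map_eraseIdx]; exact hr)
        rw [if_pos hp1, if_pos hp2, if_pos hr, if_pos hr', heq, ← add_smul]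
        have hzero : ((-1 : K) ^ j + (-1 : K) ^ (j + 1)) = 0 := by ring
        rw [hzero, zero_smul]
      · have hr' : ¬ PH.Reg ((p.map f).eraseIdx j) := by rw [heq]; exact hr
        simp [hr, hr']

lemma comm (f : V → V') (v : List V →₀ K) :
    PH.dReg K V' (PH.find K f v) = PH.find K f (PH.dReg K V v) := by
  have h : (PH.dReg K V' ∘ₗ PH.find K f) = (PH.find K f ∘ₗ PH.dReg K V) := by
    refine Finsupp.lhom_ext fun p c => ?_
    have hs : (Finsupp.single p c) = c • Finsupp.single p (1 : K) := by
      rw [Finsupp.smul_single, smul_eq_mul, mul_one]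
    simp only [LinearMap.comp_apply, hs, map_smul, comm_single]
  exact DFunLike.congr_fun h v

variable {G : PH.Digraph' V} {G' : PH.Digraph' V'} {f : V → V'}

lemma find_A (hf : PH.IsDigraphMap G G' f) (n : ℕ) :
    ∀ v ∈ PH.Asub K (PH.pathsOf G) n, PH.find K f v ∈ PH.Asub K (PH.pathsOf G') n := by
  intro v hv
  have hle : PH.Asub K (PH.pathsOf G) n ≤
      Submodule.comap (PH.find K f) (PH.Asub K (PH.pathsOf G') n) := by
    rw [PH.Asub, Finsupp.supported_eq_span_single, Submodule.span_le]
    rintro x ⟨l, hl, rfl⟩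
    obtain ⟨hP, hlen, hreg⟩ := hl
    obtain ⟨hne, hch⟩ : l ≠ [] ∧ l.Chain' G.edge := hP
    simp only [SetLike.mem_coe, Submodule.mem_comap]
    rw [find_single]
    split_ifs with hr
    · refine Finsupp.single_mem_supported K 1 ⟨⟨?_, ?_⟩, ?_, hr⟩
      · simpa using hne
      · rw [chain'_map_]
        rw [PH.Reg, chain'_map_] at hr
        rw [chain'_iff_get_] at hch hr ⊢
        intro i hi
        rcases hf _ _ (hch i hi) with h | h
        · exact absurd h (hr i hi)
        · exact h
      · rw [List.length_map]; exact hlen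
    · exact zero_mem _
  exact hle hv

lemma find_Omega (hf : PH.IsDigraphMap G G' f) (n : ℕ) :
    ∀ v ∈ PH.OmegaSub K (PH.pathsOf G) n,
      PH.find K f v ∈ PH.OmegaSub K (PH.pathsOf G') n := by
  rintro v ⟨hA, hd⟩
  refine ⟨find_A hf n v hA, Submodule.mem_comap.2 ?_⟩
  rw [comm]
  exact find_A hf (n - 1) _ (Submodule.mem_comap.1 hd)

lemma find_Z (hf : PH.IsDigraphMap G G' f) (n : ℕ) :
    ∀ z ∈ PH.Zsub K (PH.pathsOf G) n,
      PH.find K f z ∈ PH.Zsub K (PH.pathsOf G') n := by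
  rintro z ⟨hO, hk⟩
  refine ⟨find_Omega hf n z hO, LinearMap.mem_ker.2 ?_⟩
  rw [comm, LinearMap.mem_ker.1 hk, map_zero]

lemma find_B (hf : PH.IsDigraphMap G G' f) (n : ℕ) :
    ∀ x ∈ PH.Bsub K (PH.pathsOf G) n,
      PH.find K f x ∈ PH.Bsub K (PH.pathsOf G') n := by
  rintro x ⟨w, hw, rfl⟩
  exact ⟨PH.find K f w, find_Omega hf (n + 1) w hw, comm f w⟩

end S6

theorem statement6 (K : Type) [Field K] (V V' : Type) [Fintype V] [Fintype V']
    (G : PH.Digraph' V) (G' : PH.Digraph' V') (f : V → V')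
    (hf : PH.IsDigraphMap G G' f) :
    -- f_* restricts to the ∂-invariant chains
    (∀ (n : ℕ) (v : List V →₀ K), v ∈ PH.OmegaSub K (PH.pathsOf G) n →
        PH.find K f v ∈ PH.OmegaSub K (PH.pathsOf G') n) ∧
    -- f_* : Ω_*(G) → Ω_*(G') is a chain map
    (∀ (n : ℕ) (v : List V →₀ K), v ∈ PH.OmegaSub K (PH.pathsOf G) n →
        PH.dReg K V' (PH.find K f v) = PH.find K f (PH.dReg K V v)) ∧
    -- hence f induces homomorphisms on path homology, sending [z] to [f_* z]
    (∀ n : ℕ, ∃ h : PH.Hsm K (PH.pathsOf G) n →ₗ[K] PH.Hsm K (PH.pathsOf G') n,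
      ∀ (z : List V →₀ K) (hz : z ∈ PH.Zsub K (PH.pathsOf G) n)
        (hz' : PH.find K f z ∈ PH.Zsub K (PH.pathsOf G') n),
        h ⟨(PH.Bsub K (PH.pathsOf G) n).mkQ z, Submodule.mem_map_of_mem hz⟩ =
          ⟨(PH.Bsub K (PH.pathsOf G') n).mkQ (PH.find K f z),
            Submodule.mem_map_of_mem hz'⟩) := by
  refine ⟨fun n v hv => S6.find_Omega hf n v hv, fun n v _ => S6.comm f v, fun n => ?_⟩
  have hB : PH.Bsub K (PH.pathsOf G) n ≤
      Submodule.comap (PH.find K f) (PH.Bsub K (PH.pathsOf G') n) :=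
    fun x hx => S6.find_B hf n x hx
  have hres : ∀ x ∈ PH.Hsm K (PH.pathsOf G) n,
      Submodule.mapQ _ _ (PH.find K f) hB x ∈ PH.Hsm K (PH.pathsOf G') n := by
    rintro x ⟨z, hz, rfl⟩
    refine ⟨PH.find K f z, S6.find_Z hf n z hz, ?_⟩
    rw [Submodule.mkQ_apply, Submodule.mkQ_apply, Submodule.mapQ_apply]
  refine ⟨(Submodule.mapQ _ _ (PH.find K f) hB).restrict hres, fun z hz hz' => ?_⟩
  apply Subtype.ext
  show (Submodule.mapQ _ _ (PH.find K f) hB) ((PH.Bsub K (PH.pathsOf G) n).mkQ z) =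
    (PH.Bsub K (PH.pathsOf G') n).mkQ (PH.find K f z)
  rw [Submodule.mkQ_apply, Submodule.mkQ_apply, Submodule.mapQ_apply]
end

section
/- If f, g : G → G' are homotopic digraph maps, then they induce the same homomorphisms on path homology: f_* = g_* : H_n(G) → H_n(G') for all n. Consequently, if digraphs G and H are homotopy equivalent, then H_n(G) ≅ H_n(H) for all n; moreover, if the homotopy equivalence is realized by digraph maps f : G → H and g : H → G, then the induced maps f_* and g_* are mutually inverse isomorphisms of the path homology groups of G and H. -/
/-!
STATEMENT 7: Homotopic digraph maps f, g : G → G' induce the same homomorphisms on path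
homology (f_* = g_* : H_n(G) → H_n(G') for all n).  Consequently, homotopy equivalent
digraphs have isomorphic path homology in all degrees, and if the homotopy equivalence is
realized by digraph maps f : G → H and g : H → G then f_* and g_* are mutually inverse
isomorphisms.

"f_* = g_* on H_n" is expressed at the level of cycles: for every n-cycle z of Ω_*(G),
the images f_* z and g_* z are n-cycles of Ω_*(G') whose difference is an n-boundary
(an element of ∂Ω_{n+1}(G')); "mutually inverse" is expressed by g_*(f_* z) − z being a
boundary for all cycles z of G (and symmetrically), together with H_n(G) ≅ H_n(H).
-/

open scoped Classical

namespace PH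

/-- One-step homotopy of maps into a digraph H: f(x) ⇒ g(x) for all x, or
g(x) ⇒ f(x) for all x (where a ⇒ b means a = b or a → b). -/
def StepHomotopic {V W : Type} (H : Digraph' W) (f g : V → W) : Prop :=
  (∀ x : V, f x = g x ∨ H.edge (f x) (g x)) ∨
  (∀ x : V, g x = f x ∨ H.edge (g x) (f x))

/-- f ≃ g : a finite chain of one-step homotopies through digraph maps G → H. -/
def DHomotopic {V W : Type} (G : Digraph' V) (H : Digraph' W) (f g : V → W) : Prop :=
  Relation.ReflTransGen
    (fun a b => IsDigraphMap G H a ∧ IsDigraphMap G H b ∧ StepHomotopic H a b) f g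

end PH

namespace PH7
open PH List Finsupp

variable {K : Type} [Field K] {V W X : Type}

lemma chain'_def {α : Type} {R : α → α → Prop} {l : List α} : l.Chain' R ↔ l.IsChain R := Iff.rfl


lemma reg_iff {l : List V} :
    Reg l ↔ ∀ (i : ℕ) (h : i + 1 < l.length), l[i]'(by omega) ≠ l[i+1]'h := by
  rw [Reg, chain'_def, List.isChain_iff_getElem]

lemma reg_of_map_reg {f : V → W} {l : List V} (h : Reg (l.map f)) : Reg l := by
  rw [Reg, chain'_def, List.isChain_map] at h
  exact h.imp fun a b hab e => hab (by rw [e])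

lemma not_reg_map {f : V → W} {l : List V} (h : ¬ Reg l) : ¬ Reg (l.map f) :=
  fun h2 => h (reg_of_map_reg h2)

lemma two_le_length_of_not_reg {l : List V} (h : ¬ Reg l) : 2 ≤ l.length := by
  rcases l with _ | ⟨a, _ | ⟨b, t⟩⟩
  · exact absurd List.isChain_nil h
  · exact absurd (List.isChain_singleton a) h
  · simp only [List.length_cons]; omega

/-- the basic boundary vector, as a range-indexed sum -/
noncomputable def bd (K : Type) [Field K] {V : Type} (p : List V) : List V →₀ K :=
  if 2 ≤ p.length then
    ∑ q ∈ Finset.range p.length, ((-1 : K) ^ q) •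
      (if Reg (p.eraseIdx q) then Finsupp.single (p.eraseIdx q) (1 : K) else 0)
  else 0

lemma dReg_single (p : List V) (c : K) :
    dReg K V (Finsupp.single p c) = c • bd K p := by
  rw [PH.dReg, Finsupp.lsum_single, LinearMap.toSpanSingleton_apply, bd,
    Fin.sum_univ_eq_sum_range (fun q => ((-1 : K) ^ q) •
      (if Reg (p.eraseIdx q) then Finsupp.single (p.eraseIdx q) (1 : K) else 0))]

noncomputable def fd (K : Type) [Field K] {V W : Type} (f : V → W) (p : List V) :
    List W →₀ K :=
  if Reg (p.map f) then Finsupp.single (p.map f) (1 : K) else 0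

lemma find_single (f : V → W) (p : List V) (c : K) :
    find K f (Finsupp.single p c) = c • fd K f p := by
  rw [PH.find, Finsupp.lsum_single, LinearMap.toSpanSingleton_apply, fd]

lemma eraseIdx_map (f : V → W) (l : List V) (q : ℕ) :
    (l.eraseIdx q).map f = (l.map f).eraseIdx q := by
  simp [List.eraseIdx_eq_take_drop_succ, List.map_take, List.map_drop]

/-- cancellation: the boundary vector of a non-regular path is 0. -/
lemma bd_eq_zero_of_not_reg (p : List V) (hp : ¬ Reg p) : (bd K p : List V →₀ K) = 0 := by
  obtain ⟨i, hi, heq⟩ :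
      ∃ (i : ℕ) (h : i + 1 < p.length), p[i]'(by omega) = p[i+1]'h := by
    rw [reg_iff] at hp; push_neg at hp; exact hp
  have h2 : 2 ≤ p.length := by omega
  rw [bd, if_pos h2]
  set t : ℕ → (List V →₀ K) := fun q => ((-1 : K) ^ q) •
      (if Reg (p.eraseIdx q) then Finsupp.single (p.eraseIdx q) (1 : K) else 0) with ht
  have hsub : ({i, i+1} : Finset ℕ) ⊆ Finset.range p.length := by
    intro x hx; simp only [Finset.mem_insert, Finset.mem_singleton] at hx
    rcases hx with rfl | rfl <;> simp only [Finset.mem_range] <;> omega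
  have hzero : ∀ q ∈ Finset.range p.length, q ∉ ({i, i+1} : Finset ℕ) → t q = 0 := by
    intro q hq hq'
    simp only [Finset.mem_insert, Finset.mem_singleton, not_or] at hq'
    simp only [Finset.mem_range] at hq
    have hlen : (p.eraseIdx q).length = p.length - 1 := by
      rw [List.length_eraseIdx]; simp [hq]
    have hnr : ¬ Reg (p.eraseIdx q) := by
      rw [reg_iff]; push_neg
      rcases Nat.lt_or_ge q i with hqi | hqi
      · -- q < i : pair at positions i-1, i
        refine ⟨i - 1, by omega, ?_⟩
        rw [List.getElem_eraseIdx, List.getElem_eraseIdx]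
        rw [dif_neg (by omega), dif_neg (by omega)]
        have e1 : i - 1 + 1 = i := by omega
        have e2 : i - 1 + 1 + 1 = i + 1 := by omega
        simp only [e1, e2]
        exact heq
      · -- q > i + 1
        have hqi' : i + 1 < q := by
          rcases Nat.lt_or_ge (i+1) q with h | h
          · exact h
          · exfalso; omega
        refine ⟨i, by omega, ?_⟩
        rw [List.getElem_eraseIdx, List.getElem_eraseIdx]
        rw [dif_pos (by omega), dif_pos (by omega)]
        exact heq
    simp [ht, hnr]
  have hpair : p.eraseIdx i = p.eraseIdx (i+1) := by
    apply List.ext_getElem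
    · rw [List.length_eraseIdx, List.length_eraseIdx]
      simp only [if_pos (show i < p.length by omega), if_pos (show i + 1 < p.length by omega)]
    · intro n h1n h2n
      rw [List.getElem_eraseIdx, List.getElem_eraseIdx]
      have hlen : (p.eraseIdx i).length = p.length - 1 := by
        rw [List.length_eraseIdx]; simp only [if_pos (show i < p.length by omega)]
      by_cases hni : n < i
      · rw [dif_pos hni, dif_pos (by omega)]
      · by_cases hni' : n = i
        · subst hni'
          rw [dif_neg hni, dif_pos (by omega)]
          exact heq.symm
        · rw [dif_neg hni, dif_neg (by omega)]
  rw [← Finset.sum_sdiff hsub,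
    Finset.sum_eq_zero (fun q hq => hzero q (Finset.mem_sdiff.mp hq).1 (Finset.mem_sdiff.mp hq).2),
    zero_add, Finset.sum_pair (by omega : i ≠ i + 1)]
  simp only [ht, hpair]
  rw [show ((-1 : K)^(i+1)) = -((-1 : K)^i) by ring, neg_smul]
  exact add_neg_cancel _

lemma find_if (f : V → W) (l : List V) :
    find K f (if Reg l then Finsupp.single l (1:K) else 0) =
      (if Reg (l.map f) then Finsupp.single (l.map f) (1:K) else 0) := by
  by_cases h : Reg l
  · rw [if_pos h, find_single, one_smul, fd]
  · rw [if_neg h, map_zero, if_neg (not_reg_map h)]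

lemma find_bd (f : V → W) (p : List V) : find K f (bd K p) = bd K (p.map f) := by
  rw [bd, bd, List.length_map]
  by_cases h2 : 2 ≤ p.length
  · rw [if_pos h2, if_pos h2, map_sum]
    refine Finset.sum_congr rfl fun q hq => ?_
    rw [map_smul, find_if, eraseIdx_map]
  · rw [if_neg h2, if_neg h2, map_zero]

lemma dReg_comp_find (f : V → W) :
    (dReg K W).comp (find K f) = (find K f).comp (dReg K V) := by
  apply Finsupp.lhom_ext; intro p c
  rw [LinearMap.comp_apply, LinearMap.comp_apply, find_single, dReg_single, map_smul, map_smul]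
  congr 1
  rw [find_bd]
  by_cases h : Reg (p.map f)
  · rw [fd, if_pos h, dReg_single, one_smul]
  · rw [fd, if_neg h, map_zero, bd_eq_zero_of_not_reg _ h]

lemma dReg_find (f : V → W) (z : List V →₀ K) :
    dReg K W (find K f z) = find K f (dReg K V z) := by
  rw [← LinearMap.comp_apply, dReg_comp_find, LinearMap.comp_apply]

lemma find_comp (g : W → X) (f : V → W) :
    (find K g).comp (find K f) = find K (g ∘ f) := by
  apply Finsupp.lhom_ext; intro p c
  rw [LinearMap.comp_apply, find_single, map_smul, find_single]
  congr 1
  rw [fd, find_if g (p.map f), List.map_map, fd]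

lemma map_supported_mem {S : Set (List V)} {z : List V →₀ K}
    (hz : z ∈ Finsupp.supported K K S)
    (T : (List V →₀ K) →ₗ[K] (List W →₀ K)) (M : Submodule K (List W →₀ K))
    (h : ∀ l ∈ S, T (Finsupp.single l 1) ∈ M) : T z ∈ M := by
  rw [Finsupp.supported_eq_span_single] at hz
  induction hz using Submodule.span_induction with
  | mem x hx => obtain ⟨l, hl, rfl⟩ := hx; exact h l hl
  | zero => simp
  | add x y hx hy ihx ihy => rw [map_add]; exact M.add_mem ihx ihy
  | smul a x hx ih => rw [map_smul]; exact M.smul_mem a ih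

lemma eq_on_supported {S : Set (List V)} {z : List V →₀ K}
    (hz : z ∈ Finsupp.supported K K S) {N : Type} [AddCommGroup N] [Module K N]
    (A B : (List V →₀ K) →ₗ[K] N)
    (h : ∀ l ∈ S, A (Finsupp.single l 1) = B (Finsupp.single l 1)) : A z = B z := by
  rw [Finsupp.supported_eq_span_single] at hz
  induction hz using Submodule.span_induction with
  | mem x hx => obtain ⟨l, hl, rfl⟩ := hx; exact h l hl
  | zero => simp
  | add x y hx hy ihx ihy => rw [map_add, map_add, ihx, ihy]
  | smul a x hx ih => rw [map_smul, map_smul, ih]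

lemma chain'_and {α : Type} {R S : α → α → Prop} {l : List α}
    (h1 : l.Chain' R) (h2 : l.Chain' S) : l.Chain' (fun a b => R a b ∧ S a b) := by
  rw [chain'_def, List.isChain_iff_getElem] at *
  exact fun i h => ⟨h1 i h, h2 i h⟩

lemma find_mem_Asub {G : Digraph' V} {H : Digraph' W} {f : V → W} (hf : IsDigraphMap G H f)
    {n : ℕ} {z : List V →₀ K} (hz : z ∈ Asub K (pathsOf G) n) :
    find K f z ∈ Asub K (pathsOf H) n := by
  refine map_supported_mem hz _ _ fun l hl => ?_
  obtain ⟨⟨hne, hch⟩, hlen, hreg⟩ := hl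
  rw [find_single, one_smul, fd]
  by_cases h : Reg (l.map f)
  · rw [if_pos h]
    refine Finsupp.single_mem_supported K 1 ?_
    refine ⟨⟨by simpa using hne, ?_⟩, by simpa using hlen, h⟩
    rw [chain'_def, List.isChain_map]
    have h1 : l.Chain' (fun a b => f a = f b ∨ H.edge (f a) (f b)) :=
      List.IsChain.imp hf hch
    have h2 : l.Chain' (fun a b => f a ≠ f b) := (List.isChain_map f).mp h
    exact List.IsChain.imp (fun a b hab => hab.1.resolve_left hab.2) (chain'_and h1 h2)
  · rw [if_neg h]; exact Submodule.zero_mem _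

lemma find_mem_Omega {G : Digraph' V} {H : Digraph' W} {f : V → W} (hf : IsDigraphMap G H f)
    {n : ℕ} {z : List V →₀ K} (hz : z ∈ OmegaSub K (pathsOf G) n) :
    find K f z ∈ OmegaSub K (pathsOf H) n := by
  rw [OmegaSub, Submodule.mem_inf] at hz ⊢
  obtain ⟨h1, h2⟩ := hz
  rw [Submodule.mem_comap] at h2 ⊢
  refine ⟨find_mem_Asub hf h1, ?_⟩
  rw [dReg_find]
  exact find_mem_Asub hf h2

lemma find_mem_Zsub {G : Digraph' V} {H : Digraph' W} {f : V → W} (hf : IsDigraphMap G H f)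
    {n : ℕ} {z : List V →₀ K} (hz : z ∈ Zsub K (pathsOf G) n) :
    find K f z ∈ Zsub K (pathsOf H) n := by
  rw [Zsub, Submodule.mem_inf] at hz ⊢
  obtain ⟨h1, h2⟩ := hz
  refine ⟨find_mem_Omega hf h1, ?_⟩
  rw [LinearMap.mem_ker] at h2 ⊢
  rw [dReg_find, h2, map_zero]

lemma find_mem_Bsub {G : Digraph' V} {H : Digraph' W} {f : V → W} (hf : IsDigraphMap G H f)
    {n : ℕ} {z : List V →₀ K} (hz : z ∈ Bsub K (pathsOf G) n) :
    find K f z ∈ Bsub K (pathsOf H) n := by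
  rw [Bsub, Submodule.mem_map] at hz ⊢
  obtain ⟨w, hw, rfl⟩ := hz
  exact ⟨find K f w, find_mem_Omega hf hw, dReg_find f w⟩

lemma find_id_eq {P : Set (List V)} {n : ℕ} {z : List V →₀ K}
    (hz : z ∈ Asub K P n) : find K (id : V → V) z = z := by
  have := eq_on_supported hz (find K (id : V → V)) LinearMap.id (fun l hl => ?_)
  · simpa using this
  · rw [find_single, one_smul, fd, List.map_id, if_pos hl.2.2, LinearMap.id_apply]

/-! ### The cylinder digraph and the prism operator -/

def cyl {V : Type} (G : Digraph' V) : Digraph' (V × Bool) where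
  edge a b := (a.2 = b.2 ∧ G.edge a.1 b.1) ∨ (a.1 = b.1 ∧ a.2 = false ∧ b.2 = true)
  loopless v h := by
    rcases h with ⟨_, h⟩ | ⟨_, h2, h3⟩
    · exact G.loopless _ h
    · rw [h2] at h3; cases h3

def prl {V : Type} (k : ℕ) (p : List V) : List (V × Bool) :=
  (p.take (k+1)).map (fun x => (x, false)) ++ (p.drop k).map (fun x => (x, true))

def spl {V : Type} (k : ℕ) (p : List V) : List (V × Bool) :=
  (p.take k).map (fun x => (x, false)) ++ (p.drop k).map (fun x => (x, true))

noncomputable def prV (K : Type) [Field K] {V : Type} (p : List V) : List (V × Bool) →₀ K :=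
  ∑ k ∈ Finset.range p.length, ((-1:K)^k) • Finsupp.single (prl k p) (1:K)

noncomputable def prism (K : Type) [Field K] (V : Type) :
    (List V →₀ K) →ₗ[K] (List (V × Bool) →₀ K) :=
  Finsupp.lsum K fun p => LinearMap.toSpanSingleton K _ (prV K p)

lemma prism_single (p : List V) (c : K) :
    prism K V (Finsupp.single p c) = c • prV K p := by
  rw [prism, Finsupp.lsum_single, LinearMap.toSpanSingleton_apply]

lemma prl_length {k : ℕ} {p : List V} (hk : k < p.length) :
    (prl k p).length = p.length + 1 := by
  simp only [prl, List.length_append, List.length_map, List.length_take, List.length_drop]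
  omega

lemma spl_length {k : ℕ} {p : List V} (hk : k ≤ p.length) :
    (spl k p).length = p.length := by
  simp only [spl, List.length_append, List.length_map, List.length_take, List.length_drop]
  omega

lemma getElem_congr_idx {p : List V} {a b : ℕ} (h : a = b) (ha : a < p.length) :
    p[a]'ha = p[b]'(h ▸ ha) := by subst h; rfl

lemma prl_getElem_le {k : ℕ} {p : List V} (hk : k < p.length) {j : ℕ} (hjk : j ≤ k)
    (hj : j < (prl k p).length) :
    (prl k p)[j] = (p[j]'(by omega), false) := by
  simp only [prl]
  rw [List.getElem_append]
  rw [dif_pos (by simp only [List.length_map, List.length_take]; omega)]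
  rw [List.getElem_map]
  congr 1
  exact List.getElem_take

lemma prl_getElem_gt {k : ℕ} {p : List V} (hk : k < p.length) {j : ℕ} (hjk : k < j)
    (hj : j < (prl k p).length) :
    (prl k p)[j] = (p[j-1]'(by rw [prl_length hk] at hj; omega), true) := by
  simp only [prl]
  rw [List.getElem_append]
  rw [dif_neg (by simp only [List.length_map, List.length_take]; omega)]
  rw [List.getElem_map, List.getElem_drop]
  congr 1
  apply getElem_congr_idx
  simp only [List.length_map, List.length_take]
  rw [prl_length hk] at hj
  omega

lemma spl_getElem {k : ℕ} {p : List V} (hk : k ≤ p.length) {j : ℕ}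
    (hj : j < (spl k p).length) :
    (spl k p)[j] = (p[j]'(by rw [spl_length hk] at hj; omega), decide (k ≤ j)) := by
  simp only [spl]
  rw [List.getElem_append]
  by_cases hjk : j < k
  · rw [dif_pos (by simp only [List.length_map, List.length_take]; omega)]
    rw [List.getElem_map]
    have : decide (k ≤ j) = false := by simp; omega
    rw [this]
    congr 1
    exact List.getElem_take
  · rw [dif_neg (by simp only [List.length_map, List.length_take]; omega)]
    rw [List.getElem_map, List.getElem_drop]
    have : decide (k ≤ j) = true := by simp; omega
    rw [this]
    congr 1
    apply getElem_congr_idx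
    simp only [List.length_map, List.length_take]
    rw [spl_length hk] at hj
    omega

/-- E2: deleting the first junction vertex of the prism. -/
lemma prl_eraseIdx_self {k : ℕ} {p : List V} (hk : k < p.length) :
    (prl k p).eraseIdx k = spl k p := by
  apply List.ext_getElem
  · rw [List.length_eraseIdx, prl_length hk, if_pos (by omega), spl_length (by omega)]; omega
  · intro j h1 h2
    rw [List.getElem_eraseIdx, spl_getElem (by omega : k ≤ p.length)]
    by_cases hjk : j < k
    · rw [dif_pos hjk, prl_getElem_le hk (by omega)]
      have : decide (k ≤ j) = false := by simp; omega
      rw [this]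
    · rw [dif_neg hjk, prl_getElem_gt hk (by omega)]
      have : decide (k ≤ j) = true := by simp; omega
      rw [this]
      rw [Prod.mk.injEq]
      refine ⟨?_, rfl⟩
      apply getElem_congr_idx
      omega

/-- E3: deleting the second junction vertex of the prism. -/
lemma prl_eraseIdx_succ_self {k : ℕ} {p : List V} (hk : k < p.length) :
    (prl k p).eraseIdx (k+1) = spl (k+1) p := by
  apply List.ext_getElem
  · rw [List.length_eraseIdx, prl_length hk, if_pos (by omega), spl_length (by omega)]; omega
  · intro j h1 h2
    rw [List.getElem_eraseIdx, spl_getElem (by omega : k + 1 ≤ p.length)]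
    by_cases hjk : j < k + 1
    · rw [dif_pos hjk, prl_getElem_le hk (by omega)]
      have : decide (k + 1 ≤ j) = false := by simp; omega
      rw [this]
    · rw [dif_neg hjk, prl_getElem_gt hk (by omega)]
      have : decide (k + 1 ≤ j) = true := by simp; omega
      rw [this]
      rw [Prod.mk.injEq]
      refine ⟨?_, rfl⟩
      apply getElem_congr_idx
      omega

/-- E1: deleting a vertex strictly inside the bottom of the prism. -/
lemma prl_eraseIdx_lt {m q : ℕ} {p : List V} (hm : m + 1 < p.length) (hq : q ≤ m) :
    (prl (m+1) p).eraseIdx q = prl m (p.eraseIdx q) := by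
  have hlq : (p.eraseIdx q).length = p.length - 1 := by
    rw [List.length_eraseIdx, if_pos (by omega)]
  have hm' : m < (p.eraseIdx q).length := by omega
  apply List.ext_getElem
  · rw [List.length_eraseIdx, prl_length (by omega), if_pos (by omega), prl_length hm', hlq]; omega
  · intro j h1 h2
    have hj' : j < p.length := by
      rw [List.length_eraseIdx, prl_length (by omega), if_pos (by omega)] at h1
      omega
    rw [List.getElem_eraseIdx]
    by_cases hjq : j < q
    · rw [dif_pos hjq, prl_getElem_le (by omega) (by omega : j ≤ m + 1),
        prl_getElem_le hm' (by omega : j ≤ m)]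
      rw [Prod.mk.injEq]
      refine ⟨?_, rfl⟩
      rw [List.getElem_eraseIdx, dif_pos hjq]
    · by_cases hjm : j ≤ m
      · rw [dif_neg hjq, prl_getElem_le (by omega) (by omega : j + 1 ≤ m + 1),
          prl_getElem_le hm' (by omega : j ≤ m)]
        rw [Prod.mk.injEq]
        refine ⟨?_, rfl⟩
        rw [List.getElem_eraseIdx, dif_neg hjq]
      · rw [dif_neg hjq, prl_getElem_gt (by omega) (by omega : m + 1 < j + 1),
          prl_getElem_gt hm' (by omega : m < j)]
        rw [Prod.mk.injEq]
        refine ⟨?_, rfl⟩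
        rw [List.getElem_eraseIdx, dif_neg (by omega)]
        apply getElem_congr_idx
        omega

/-- E4: deleting a vertex strictly inside the top of the prism. -/
lemma prl_eraseIdx_gt {k r : ℕ} {p : List V} (hk : k < p.length) (hr : k + 1 ≤ r)
    (hr2 : r < p.length) :
    (prl k p).eraseIdx (r+1) = prl k (p.eraseIdx r) := by
  have hlr : (p.eraseIdx r).length = p.length - 1 := by
    rw [List.length_eraseIdx, if_pos hr2]
  have hk' : k < (p.eraseIdx r).length := by omega
  apply List.ext_getElem
  · rw [List.length_eraseIdx, prl_length hk, if_pos (by omega), prl_length hk', hlr]; omega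
  · intro j h1 h2
    have hj' : j < p.length := by
      rw [List.length_eraseIdx, prl_length hk, if_pos (by omega)] at h1
      omega
    rw [List.getElem_eraseIdx]
    by_cases hjk : j ≤ k
    · rw [dif_pos (by omega), prl_getElem_le hk hjk, prl_getElem_le hk' hjk]
      rw [Prod.mk.injEq]
      refine ⟨?_, rfl⟩
      rw [List.getElem_eraseIdx, dif_pos (by omega)]
    · by_cases hjr : j ≤ r
      · rw [dif_pos (by omega), prl_getElem_gt hk (by omega), prl_getElem_gt hk' (by omega)]
        rw [Prod.mk.injEq]
        refine ⟨?_, rfl⟩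
        rw [List.getElem_eraseIdx, dif_pos (by omega)]
      · rw [dif_neg (by omega), prl_getElem_gt hk (by omega), prl_getElem_gt hk' (by omega)]
        rw [Prod.mk.injEq]
        refine ⟨?_, rfl⟩
        rw [List.getElem_eraseIdx, dif_neg (by omega)]
        apply getElem_congr_idx
        omega

lemma chain'_iff_getElem' {α : Type} {R : α → α → Prop} {l : List α} :
    l.Chain' R ↔ ∀ (i : ℕ) (h : i + 1 < l.length), R (l[i]'(by omega)) (l[i+1]'h) := by
  rw [chain'_def, List.isChain_iff_getElem]

lemma reg_spl {k : ℕ} {p : List V} (hk : k ≤ p.length) (hp : Reg p) : Reg (spl k p) := by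
  rw [reg_iff]
  intro j hj
  have hl : (spl k p).length = p.length := spl_length hk
  rw [spl_getElem hk, spl_getElem hk]
  have hne := (reg_iff.mp hp) j (by omega)
  intro heq
  rw [Prod.mk.injEq] at heq
  exact hne heq.1

lemma reg_prl_of_reg {k : ℕ} {p : List V} (hk : k < p.length) (hp : Reg p) :
    Reg (prl k p) := by
  rw [reg_iff]
  intro j hj
  have hl := prl_length (p := p) hk
  by_cases h1 : j + 1 ≤ k
  · rw [prl_getElem_le hk (by omega), prl_getElem_le hk (by omega)]
    intro heq; rw [Prod.mk.injEq] at heq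
    exact (reg_iff.mp hp) j (by omega) heq.1
  · by_cases h2 : j ≤ k
    · rw [prl_getElem_le hk h2, prl_getElem_gt hk (by omega)]
      intro heq; rw [Prod.mk.injEq] at heq
      exact absurd heq.2 (by simp)
    · rw [prl_getElem_gt hk (by omega), prl_getElem_gt hk (by omega)]
      intro heq; rw [Prod.mk.injEq] at heq
      obtain ⟨heq1, -⟩ := heq
      simp only [show j + 1 - 1 = (j - 1) + 1 from by omega] at heq1
      exact (reg_iff.mp hp) (j-1) (by omega) heq1

lemma reg_of_reg_prl {k : ℕ} {p : List V} (hk : k < p.length) (h : Reg (prl k p)) :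
    Reg p := by
  rw [reg_iff]
  intro i hi
  have hl := prl_length (p := p) hk
  by_cases h1 : i + 1 ≤ k
  · have hR := (reg_iff.mp h) i (by omega)
    rw [prl_getElem_le hk (by omega), prl_getElem_le hk (by omega)] at hR
    intro heq; exact hR (by rw [Prod.mk.injEq]; exact ⟨heq, rfl⟩)
  · have hR := (reg_iff.mp h) (i+1) (by omega)
    rw [prl_getElem_gt hk (by omega), prl_getElem_gt hk (by omega)] at hR
    simp only [show i + 1 - 1 = i from by omega, show i + 1 + 1 - 1 = i + 1 from by omega] at hR
    intro heq; exact hR (by rw [Prod.mk.injEq]; exact ⟨heq, rfl⟩)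

lemma prl_chain' {G : Digraph' V} {k : ℕ} {l : List V} (hch : l.Chain' G.edge)
    (hk : k < l.length) : (prl k l).Chain' (cyl G).edge := by
  rw [chain'_iff_getElem']
  intro j hj
  have hl := prl_length (p := l) hk
  have hedge := chain'_iff_getElem'.mp hch
  by_cases h1 : j + 1 ≤ k
  · rw [prl_getElem_le hk (by omega), prl_getElem_le hk (by omega)]
    exact Or.inl ⟨rfl, hedge j (by omega)⟩
  · by_cases h2 : j ≤ k
    · rw [prl_getElem_le hk h2, prl_getElem_gt hk (by omega)]
      refine Or.inr ⟨?_, rfl, rfl⟩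
      show l[j]'_ = l[j+1-1]'_
      apply getElem_congr_idx
      omega
    · rw [prl_getElem_gt hk (by omega), prl_getElem_gt hk (by omega)]
      refine Or.inl ⟨rfl, ?_⟩
      show G.edge (l[j-1]'_) (l[j+1-1]'_)
      have := hedge (j-1) (by omega)
      simp only [show j + 1 - 1 = (j - 1) + 1 from by omega]
      exact this

lemma prism_mem_Asub {G : Digraph' V} {n : ℕ} {z : List V →₀ K}
    (hz : z ∈ Asub K (pathsOf G) n) :
    prism K V z ∈ Asub K (pathsOf (cyl G)) (n+1) := by
  refine map_supported_mem hz _ _ fun l hl => ?_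
  obtain ⟨⟨hne, hch⟩, hlen, hreg⟩ := hl
  rw [prism_single, one_smul, prV]
  refine Submodule.sum_mem _ fun k hk => Submodule.smul_mem _ _ ?_
  rw [Finset.mem_range] at hk
  refine Finsupp.single_mem_supported K 1 ?_
  refine ⟨⟨?_, prl_chain' hch hk⟩, ?_, reg_prl_of_reg hk hreg⟩
  · intro h
    have := prl_length (p := l) hk
    rw [h] at this
    simp at this
  · rw [prl_length hk, hlen]

noncomputable def Fx (K : Type) [Field K] {V : Type} (p : List V) (k q : ℕ) :
    List (V × Bool) →₀ K :=
  ((-1:K)^(k+q)) • (if Reg ((prl k p).eraseIdx q)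
    then Finsupp.single ((prl k p).eraseIdx q) (1:K) else 0)

noncomputable def ux (K : Type) [Field K] {V : Type} (p : List V) (m r : ℕ) :
    List (V × Bool) →₀ K :=
  ((-1:K)^(m+r)) • (if Reg (p.eraseIdx r)
    then Finsupp.single (prl m (p.eraseIdx r)) (1:K) else 0)

lemma neg_one_pow_even (k : ℕ) : ((-1:K))^(k+k) = 1 := by
  rw [pow_add, ← mul_pow]; norm_num

lemma Fx_cross_lt {p : List V} {k q : ℕ} (hk : k < p.length) (hq : q < k) :
    Fx K p k q = - ux K p (k-1) q := by
  obtain ⟨k', rfl⟩ : ∃ k', k = k' + 1 := ⟨k - 1, by omega⟩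
  have hlen : (p.eraseIdx q).length = p.length - 1 := by
    rw [List.length_eraseIdx, if_pos (by omega)]
  have hk' : k' < (p.eraseIdx q).length := by omega
  rw [Fx, ux, prl_eraseIdx_lt hk (by omega)]
  simp only [show k' + 1 - 1 = k' from rfl]
  have hiff : Reg (prl k' (p.eraseIdx q)) ↔ Reg (p.eraseIdx q) :=
    ⟨reg_of_reg_prl hk', reg_prl_of_reg hk'⟩
  by_cases hR : Reg (p.eraseIdx q)
  · rw [if_pos (hiff.mpr hR), if_pos hR,
      show k' + 1 + q = (k' + q) + 1 from by omega, pow_succ, mul_neg_one, neg_smul]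
  · rw [if_neg (fun h => hR (hiff.mp h)), if_neg hR, smul_zero, smul_zero, neg_zero]

lemma Fx_cross_gt {p : List V} {k r : ℕ} (hk : k < p.length) (hr : k + 1 ≤ r)
    (hr2 : r < p.length) :
    Fx K p k (r+1) = - ux K p k r := by
  have hlen : (p.eraseIdx r).length = p.length - 1 := by
    rw [List.length_eraseIdx, if_pos hr2]
  have hk' : k < (p.eraseIdx r).length := by omega
  rw [Fx, ux, prl_eraseIdx_gt hk hr hr2]
  have hiff : Reg (prl k (p.eraseIdx r)) ↔ Reg (p.eraseIdx r) :=
    ⟨reg_of_reg_prl hk', reg_prl_of_reg hk'⟩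
  by_cases hR : Reg (p.eraseIdx r)
  · rw [if_pos (hiff.mpr hR), if_pos hR,
      show k + (r + 1) = (k + r) + 1 from by omega, pow_succ, mul_neg_one, neg_smul]
  · rw [if_neg (fun h => hR (hiff.mp h)), if_neg hR, smul_zero, smul_zero, neg_zero]

lemma Fx_diag {p : List V} {k : ℕ} (hk : k < p.length) (hp : Reg p) :
    Fx K p k k = Finsupp.single (spl k p) (1:K) := by
  rw [Fx, prl_eraseIdx_self hk, if_pos (reg_spl (by omega) hp), neg_one_pow_even, one_smul]

lemma Fx_diag' {p : List V} {k : ℕ} (hk : k < p.length) (hp : Reg p) :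
    Fx K p k (k+1) = - Finsupp.single (spl (k+1) p) (1:K) := by
  rw [Fx, prl_eraseIdx_succ_self hk, if_pos (reg_spl (by omega) hp),
    show k + (k+1) = (k+k)+1 from by omega, pow_succ, neg_one_pow_even, one_mul, neg_smul,
    one_smul]

lemma cross_sum (p : List V) :
    ∑ x ∈ (Finset.range p.length).sigma
        (fun k => Finset.range (p.length + 1) \ {k, k+1}), Fx K p x.1 x.2
    = ∑ x ∈ (Finset.range p.length).sigma (fun _ => Finset.range (p.length - 1)),
        (- ux K p x.2 x.1) := by
  refine Finset.sum_nbij'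
    (fun x => if x.2 < x.1 then ⟨x.2, x.1 - 1⟩ else ⟨x.2 - 1, x.1⟩)
    (fun x => if x.1 ≤ x.2 then ⟨x.2 + 1, x.1⟩ else ⟨x.2, x.1 + 1⟩)
    ?_ ?_ ?_ ?_ ?_
  · rintro ⟨k, q⟩ hx
    simp only [Finset.mem_sigma, Finset.mem_sdiff, Finset.mem_range, Finset.mem_insert,
      Finset.mem_singleton, not_or] at hx
    dsimp only
    by_cases h : q < k
    · rw [if_pos h]
      simp only [Finset.mem_sigma, Finset.mem_range]
      exact ⟨by omega, by omega⟩
    · rw [if_neg h]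
      simp only [Finset.mem_sigma, Finset.mem_range]
      exact ⟨by omega, by omega⟩
  · rintro ⟨r, m⟩ hx
    simp only [Finset.mem_sigma, Finset.mem_range] at hx
    dsimp only
    by_cases h : r ≤ m
    · rw [if_pos h]
      simp only [Finset.mem_sigma, Finset.mem_sdiff, Finset.mem_range, Finset.mem_insert,
        Finset.mem_singleton, not_or]
      exact ⟨by omega, by omega, by omega, by omega⟩
    · rw [if_neg h]
      simp only [Finset.mem_sigma, Finset.mem_sdiff, Finset.mem_range, Finset.mem_insert,
        Finset.mem_singleton, not_or]
      exact ⟨by omega, by omega, by omega, by omega⟩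
  · rintro ⟨k, q⟩ hx
    simp only [Finset.mem_sigma, Finset.mem_sdiff, Finset.mem_range, Finset.mem_insert,
      Finset.mem_singleton, not_or] at hx
    obtain ⟨hk, hq, hq1, hq2⟩ := hx
    dsimp only
    by_cases h : q < k
    · rw [if_pos h]
      dsimp only
      rw [if_pos (by omega : q ≤ k - 1), Sigma.ext_iff]
      dsimp only
      exact ⟨by omega, heq_of_eq (by omega)⟩
    · rw [if_neg h]
      dsimp only
      rw [if_neg (by omega : ¬ q - 1 ≤ k), Sigma.ext_iff]
      dsimp only
      exact ⟨by omega, heq_of_eq (by omega)⟩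
  · rintro ⟨r, m⟩ hx
    simp only [Finset.mem_sigma, Finset.mem_sdiff, Finset.mem_range, Finset.mem_insert,
      Finset.mem_singleton, not_or] at hx
    dsimp only
    by_cases h : r ≤ m
    · rw [if_pos h]
      dsimp only
      rw [if_pos (by omega : r < m + 1), Sigma.ext_iff]
      dsimp only
      exact ⟨by omega, heq_of_eq (by omega)⟩
    · rw [if_neg h]
      dsimp only
      rw [if_neg (by omega : ¬ r + 1 < m), Sigma.ext_iff]
      dsimp only
      exact ⟨by omega, heq_of_eq (by omega)⟩
  · rintro ⟨k, q⟩ hx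
    simp only [Finset.mem_sigma, Finset.mem_sdiff, Finset.mem_range, Finset.mem_insert,
      Finset.mem_singleton, not_or] at hx
    obtain ⟨hk, hq, hq1, hq2⟩ := hx
    dsimp only
    by_cases h : q < k
    · rw [if_pos h]
      dsimp only
      exact Fx_cross_lt hk h
    · rw [if_neg h]
      dsimp only
      obtain ⟨r, rfl⟩ : ∃ r, q = r + 1 := ⟨q - 1, by omega⟩
      simp only [show r + 1 - 1 = r from rfl]
      exact Fx_cross_gt hk (by omega) (by omega)

lemma spl_zero (p : List V) : spl 0 p = p.map (fun x => (x, true)) := by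
  simp [spl]

lemma spl_top (p : List V) : spl p.length p = p.map (fun x => (x, false)) := by
  simp [spl]

lemma prism_boundary (p : List V) (hp : Reg p) :
    dReg K (V × Bool) (prism K V (Finsupp.single p (1:K))) =
      Finsupp.single (p.map (fun x => (x, true))) (1:K)
      - Finsupp.single (p.map (fun x => (x, false))) (1:K)
      - prism K V (dReg K V (Finsupp.single p (1:K))) := by
  rcases Nat.eq_zero_or_pos p.length with h0 | hpos
  · have hpnil : p = [] := List.length_eq_zero_iff.mp h0
    subst hpnil
    rw [prism_single, one_smul, prV]
    simp only [List.length_nil, Finset.range_zero, Finset.sum_empty, map_zero]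
    rw [dReg_single, bd]
    simp
  · -- expand LHS
    have expandL : dReg K (V × Bool) (prism K V (Finsupp.single p (1:K)))
        = ∑ k ∈ Finset.range p.length, ∑ q ∈ Finset.range (p.length + 1), Fx K p k q := by
      rw [prism_single, one_smul, prV, map_sum]
      refine Finset.sum_congr rfl fun k hk => ?_
      rw [Finset.mem_range] at hk
      rw [map_smul, dReg_single, one_smul, bd, prl_length hk, if_pos (by omega),
        Finset.smul_sum]
      refine Finset.sum_congr rfl fun q hq => ?_
      rw [Fx, smul_smul, ← pow_add]
    have expandR : prism K V (bd K p)
        = ∑ r ∈ Finset.range p.length, ∑ m ∈ Finset.range (p.length - 1), ux K p m r := by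
      by_cases h2 : 2 ≤ p.length
      · rw [bd, if_pos h2, map_sum]
        refine Finset.sum_congr rfl fun r hr => ?_
        rw [Finset.mem_range] at hr
        rw [map_smul]
        by_cases hR : Reg (p.eraseIdx r)
        · rw [if_pos hR, prism_single, one_smul, prV,
            show (p.eraseIdx r).length = p.length - 1 by
              rw [List.length_eraseIdx, if_pos hr],
            Finset.smul_sum]
          refine Finset.sum_congr rfl fun m hm => ?_
          rw [ux, if_pos hR, smul_smul, ← pow_add, Nat.add_comm r m]
        · rw [if_neg hR, map_zero, smul_zero]
          symm
          exact Finset.sum_eq_zero fun m hm => by rw [ux, if_neg hR, smul_zero]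
      · have hn1 : p.length = 1 := by omega
        rw [bd, if_neg h2, map_zero, hn1]
        simp
    rw [expandL]
    have hsplit : ∀ k ∈ Finset.range p.length,
        (∑ q ∈ Finset.range (p.length + 1), Fx K p k q)
        = (∑ q ∈ Finset.range (p.length + 1) \ {k, k+1}, Fx K p k q)
          + (Finsupp.single (spl k p) (1:K) - Finsupp.single (spl (k+1) p) (1:K)) := by
      intro k hk
      rw [Finset.mem_range] at hk
      have hsub : ({k, k+1} : Finset ℕ) ⊆ Finset.range (p.length + 1) := by
        intro x hx
        simp only [Finset.mem_insert, Finset.mem_singleton] at hx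
        rcases hx with rfl | rfl <;> simp only [Finset.mem_range] <;> omega
      rw [← Finset.sum_sdiff hsub, Finset.sum_pair (by omega : k ≠ k + 1),
        Fx_diag hk hp, Fx_diag' hk hp, sub_eq_add_neg]
    rw [Finset.sum_congr rfl hsplit, Finset.sum_add_distrib,
      Finset.sum_range_sub' (fun k => Finsupp.single (spl k p) (1:K)) p.length,
      Finset.sum_sigma', cross_sum,
      ← Finset.sum_sigma' (Finset.range p.length) (fun _ => Finset.range (p.length - 1))
        (fun a b => - ux K p b a)]
    have hneg : ∑ r ∈ Finset.range p.length, ∑ m ∈ Finset.range (p.length - 1),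
        (- ux K p m r) = - ∑ r ∈ Finset.range p.length, ∑ m ∈ Finset.range (p.length - 1),
        ux K p m r := by
      simp
    rw [hneg, ← expandR, spl_zero, spl_top, dReg_single, one_smul]
    abel

lemma reg_map_pair {l : List V} (b : Bool) (hl : Reg l) :
    Reg (l.map (fun x => (x, b))) := by
  rw [Reg, chain'_def, List.isChain_map]
  exact List.IsChain.imp (fun a c h e => h (congrArg Prod.fst e)) hl

lemma lift_digraph_map (G : Digraph' V) (b : Bool) :
    IsDigraphMap G (cyl G) (fun x => (x, b)) := fun i j h => Or.inr (Or.inl ⟨rfl, h⟩)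

lemma prism_boundary' {P : Set (List V)} {n : ℕ} {z : List V →₀ K}
    (hz : z ∈ Asub K P n) :
    dReg K (V × Bool) (prism K V z) =
      find K (fun x => (x, true)) z - find K (fun x => (x, false)) z
        - prism K V (dReg K V z) := by
  have := eq_on_supported hz ((dReg K (V × Bool)).comp (prism K V))
    (find K (fun x => (x, true)) - find K (fun x => (x, false))
      - (prism K V).comp (dReg K V)) (fun l hl => ?_)
  · simpa using this
  · obtain ⟨-, -, hreg⟩ := hl
    simp only [LinearMap.comp_apply, LinearMap.sub_apply]
    rw [prism_boundary l hreg, find_single, find_single, one_smul, one_smul, fd, fd,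
      if_pos (reg_map_pair true hreg), if_pos (reg_map_pair false hreg)]

lemma dReg_eq_zero_of_deg0 {P : Set (List V)} {z : List V →₀ K}
    (hz : z ∈ Asub K P 0) : dReg K V z = 0 := by
  have := eq_on_supported hz (dReg K V) 0 (fun l hl => ?_)
  · simpa using this
  · rw [dReg_single, one_smul, bd, if_neg (by rw [hl.2.1]; omega)]
    simp

lemma Zsub_le_Asub {P : Set (List V)} {n : ℕ} : Zsub K P n ≤ Asub K P n := fun z hz =>
  (Submodule.mem_inf.mp (Submodule.mem_inf.mp hz).1).1

lemma prism_mem_Omega {G : Digraph' V} {n : ℕ} {z : List V →₀ K}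
    (hz : z ∈ OmegaSub K (pathsOf G) n) :
    prism K V z ∈ OmegaSub K (pathsOf (cyl G)) (n+1) := by
  rw [OmegaSub, Submodule.mem_inf] at hz ⊢
  obtain ⟨h1, h2⟩ := hz
  rw [Submodule.mem_comap] at h2
  refine ⟨prism_mem_Asub h1, ?_⟩
  rw [Submodule.mem_comap, prism_boundary' h1]
  have hm : n + 1 - 1 = n := by omega
  rw [hm]
  refine Submodule.sub_mem _ (Submodule.sub_mem _ ?_ ?_) ?_
  · exact find_mem_Asub (lift_digraph_map G true) h1
  · exact find_mem_Asub (lift_digraph_map G false) h1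
  · rcases n with _ | m
    · rw [dReg_eq_zero_of_deg0 h1, map_zero]
      exact Submodule.zero_mem _
    · have : m + 1 - 1 = m := rfl
      rw [this] at h2
      exact prism_mem_Asub h2

lemma step_boundary {G : Digraph' V} {H : Digraph' W} {f g : V → W}
    (hf : IsDigraphMap G H f) (hg : IsDigraphMap G H g)
    (hstep : ∀ x, f x = g x ∨ H.edge (f x) (g x)) {n : ℕ} {z : List V →₀ K}
    (hz : z ∈ Zsub K (pathsOf G) n) :
    find K g z - find K f z ∈ Bsub K (pathsOf H) n := by
  set φ : V × Bool → W := fun v => if v.2 then g v.1 else f v.1 with hφdef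
  have hφ : IsDigraphMap (cyl G) H φ := by
    rintro ⟨x, a⟩ ⟨y, b⟩ h
    rcases h with ⟨hab, he⟩ | ⟨hxy, ha, hb⟩
    · dsimp only at hab he
      subst hab
      cases a
      · simpa [φ] using hf x y he
      · simpa [φ] using hg x y he
    · dsimp only at hxy ha hb
      subst hxy
      rw [ha, hb]
      simpa [φ] using hstep x
  rw [Zsub, Submodule.mem_inf] at hz
  obtain ⟨hΩ, hker⟩ := hz
  have hA : z ∈ Asub K (pathsOf G) n := (Submodule.mem_inf.mp hΩ).1
  have hdz : dReg K V z = 0 := LinearMap.mem_ker.mp hker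
  have hu : find K φ (prism K V z) ∈ OmegaSub K (pathsOf H) (n+1) :=
    find_mem_Omega hφ (prism_mem_Omega hΩ)
  have hcomp : ∀ (b : Bool), find K φ (find K (fun x => (x, b)) z)
      = find K (fun x => φ (x, b)) z := by
    intro b
    rw [← LinearMap.comp_apply, find_comp]
    rfl
  have hd : dReg K W (find K φ (prism K V z)) = find K g z - find K f z := by
    rw [dReg_find, prism_boundary' hA, hdz, map_zero, map_sub, map_sub, map_zero,
      hcomp true, hcomp false, sub_zero]
    have h1 : (fun x => φ (x, true)) = g := by funext x; simp [φ]
    have h2 : (fun x => φ (x, false)) = f := by funext x; simp [φ]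
    rw [h1, h2]
  exact ⟨find K φ (prism K V z), hu, hd⟩

lemma homotopic_boundary {G : Digraph' V} {H : Digraph' W} {f g : V → W}
    (hfg : DHomotopic G H f g) {n : ℕ} {z : List V →₀ K}
    (hz : z ∈ Zsub K (pathsOf G) n) :
    find K f z - find K g z ∈ Bsub K (pathsOf H) n := by
  induction hfg with
  | refl => rw [sub_self]; exact Submodule.zero_mem _
  | @tail b c hab hr ih =>
    obtain ⟨hb1, hb2, hstep⟩ := hr
    have h2 : find K b z - find K c z ∈ Bsub K (pathsOf H) n := by
      rcases hstep with h | h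
      · have := step_boundary hb1 hb2 h hz
        have hneg := Submodule.neg_mem _ this
        rwa [neg_sub] at hneg
      · exact step_boundary hb2 hb1 h hz
    have := Submodule.add_mem _ ih h2
    rwa [sub_add_sub_cancel] at this

lemma mapQ_mem_Hsm {G : Digraph' V} {H : Digraph' W} {f : V → W} (hf : IsDigraphMap G H f)
    (n : ℕ) :
    ∀ x ∈ Hsm K (pathsOf G) n,
      Submodule.mapQ (Bsub K (pathsOf G) n) (Bsub K (pathsOf H) n) (find K f)
        (fun _ hx => find_mem_Bsub hf hx) x ∈ Hsm K (pathsOf H) n := by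
  rintro x ⟨z, hz, rfl⟩
  refine ⟨find K f z, find_mem_Zsub hf hz, ?_⟩
  rw [Submodule.mkQ_apply, Submodule.mkQ_apply, Submodule.mapQ_apply]

lemma homology_equiv {G : Digraph' V} {H : Digraph' W} {f : V → W} {g : W → V}
    (hf : IsDigraphMap G H f) (hg : IsDigraphMap H G g)
    (hgf : ∀ (n : ℕ) (z : List V →₀ K), z ∈ Zsub K (pathsOf G) n →
      find K g (find K f z) - z ∈ Bsub K (pathsOf G) n)
    (hfg : ∀ (n : ℕ) (z : List W →₀ K), z ∈ Zsub K (pathsOf H) n →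
      find K f (find K g z) - z ∈ Bsub K (pathsOf H) n)
    (n : ℕ) : Nonempty ((Hsm K (pathsOf G) n) ≃ₗ[K] (Hsm K (pathsOf H) n)) := by
  set Fq := Submodule.mapQ (Bsub K (pathsOf G) n) (Bsub K (pathsOf H) n) (find K f)
    (fun _ hx => find_mem_Bsub hf hx) with hFq
  set Gq := Submodule.mapQ (Bsub K (pathsOf H) n) (Bsub K (pathsOf G) n) (find K g)
    (fun _ hx => find_mem_Bsub hg hx) with hGq
  set FH := Fq.restrict (mapQ_mem_Hsm hf n) with hFH
  set GH := Gq.restrict (mapQ_mem_Hsm hg n) with hGH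
  have h1 : FH.comp GH = LinearMap.id := by
    apply LinearMap.ext
    intro x
    apply Subtype.ext
    obtain ⟨z, hz, hzx⟩ := x.2
    have hval : ((FH.comp GH) x : (List W →₀ K) ⧸ Bsub K (pathsOf H) n)
        = Fq (Gq (x : (List W →₀ K) ⧸ Bsub K (pathsOf H) n)) := rfl
    rw [LinearMap.id_apply, hval, ← hzx, Submodule.mkQ_apply, Submodule.mapQ_apply,
      Submodule.mapQ_apply, Submodule.Quotient.eq]
    exact hfg n z hz
  have h2 : GH.comp FH = LinearMap.id := by
    apply LinearMap.ext
    intro x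
    apply Subtype.ext
    obtain ⟨z, hz, hzx⟩ := x.2
    have hval : ((GH.comp FH) x : (List V →₀ K) ⧸ Bsub K (pathsOf G) n)
        = Gq (Fq (x : (List V →₀ K) ⧸ Bsub K (pathsOf G) n)) := rfl
    rw [LinearMap.id_apply, hval, ← hzx, Submodule.mkQ_apply, Submodule.mapQ_apply,
      Submodule.mapQ_apply, Submodule.Quotient.eq]
    exact hgf n z hz
  exact ⟨LinearEquiv.ofLinear FH GH h1 h2⟩

end PH7

set_option maxHeartbeats 1000000 in
theorem statement7 (K : Type) [Field K] (V W : Type) [Fintype V] [Fintype W]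
    (G : PH.Digraph' V) (H : PH.Digraph' W) :
    -- homotopic digraph maps induce the same map on path homology
    (∀ f g : V → W, PH.IsDigraphMap G H f → PH.IsDigraphMap G H g →
      PH.DHomotopic G H f g →
      ∀ (n : ℕ) (z : List V →₀ K), z ∈ PH.Zsub K (PH.pathsOf G) n →
        PH.find K f z ∈ PH.Zsub K (PH.pathsOf H) n ∧
        PH.find K g z ∈ PH.Zsub K (PH.pathsOf H) n ∧
        PH.find K f z - PH.find K g z ∈ PH.Bsub K (PH.pathsOf H) n) ∧
    -- a homotopy equivalence realized by f, g gives mutually inverse isomorphisms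
    (∀ (f : V → W) (g : W → V), PH.IsDigraphMap G H f → PH.IsDigraphMap H G g →
      PH.DHomotopic G G (g ∘ f) id → PH.DHomotopic H H (f ∘ g) id →
      (∀ n : ℕ, Nonempty ((PH.Hsm K (PH.pathsOf G) n) ≃ₗ[K] (PH.Hsm K (PH.pathsOf H) n))) ∧
      (∀ (n : ℕ) (z : List V →₀ K), z ∈ PH.Zsub K (PH.pathsOf G) n →
        PH.find K g (PH.find K f z) - z ∈ PH.Bsub K (PH.pathsOf G) n) ∧
      (∀ (n : ℕ) (z : List W →₀ K), z ∈ PH.Zsub K (PH.pathsOf H) n →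
        PH.find K f (PH.find K g z) - z ∈ PH.Bsub K (PH.pathsOf H) n)) := by

  constructor
  · intro f g hf hg hfg n z hz
    exact ⟨PH7.find_mem_Zsub hf hz, PH7.find_mem_Zsub hg hz, PH7.homotopic_boundary hfg hz⟩
  · intro f g hf hg hgf hfg
    have hgf' : ∀ (n : ℕ) (z : List V →₀ K), z ∈ PH.Zsub K (PH.pathsOf G) n →
        PH.find K g (PH.find K f z) - z ∈ PH.Bsub K (PH.pathsOf G) n := by
      intro n z hz
      have h1 := PH7.homotopic_boundary hgf hz
      rw [PH7.find_id_eq (PH7.Zsub_le_Asub hz)] at h1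
      have hc : PH.find K g (PH.find K f z) = PH.find K (g ∘ f) z := by
        rw [← LinearMap.comp_apply, PH7.find_comp]
      rwa [hc]
    have hfg' : ∀ (n : ℕ) (z : List W →₀ K), z ∈ PH.Zsub K (PH.pathsOf H) n →
        PH.find K f (PH.find K g z) - z ∈ PH.Bsub K (PH.pathsOf H) n := by
      intro n z hz
      have h1 := PH7.homotopic_boundary hfg hz
      rw [PH7.find_id_eq (PH7.Zsub_le_Asub hz)] at h1
      have hc : PH.find K f (PH.find K g z) = PH.find K (f ∘ g) z := by
        rw [← LinearMap.comp_apply, PH7.find_comp]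
      rwa [hc]
    exact ⟨fun n => PH7.homology_equiv hf hg hgf' hfg' n, hgf', hfg'⟩
end

section
/- Let (V, P) and (V', P') be path complexes and f : (V, P) → (V', P') a weak morphism. Then the induced map on regular chains restricts to the ∂-invariant chains, i.e. f_*(Ω_n(P)) ⊆ Ω_n(P') for every n, giving a chain map f_* : Ω_*(P) → Ω_*(P') (∂∘f_* = f_*∘∂), and hence f induces homomorphisms f_* : H_n(P) → H_n(P') on path homology for every n. -/
/-!
STATEMENT 8: Let (V, P) and (V', P') be path complexes and f : (V, P) → (V', P') a weak
morphism.  Then the induced map on regular chains restricts to the ∂-invariant chains,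
f_*(Ω_n(P)) ⊆ Ω_n(P') for every n, giving a chain map f_* : Ω_*(P) → Ω_*(P')
(∂∘f_* = f_*∘∂), and hence f induces homomorphisms f_* : H_n(P) → H_n(P') on path
homology for every n (characterized on classes of cycles by h([z]) = [f_* z]).
-/

open scoped Classical

namespace PH

/-- A weak morphism of path complexes: the image of every allowed path is allowed or
non-regular. -/
def IsWeakMor {V W : Type} (P : Set (List V)) (S : Set (List W)) (f : V → W) : Prop :=
  ∀ p ∈ P, p.map f ∈ S ∨ ¬ Reg (p.map f)

end PH

namespace PH


lemma map_eraseIdx {V W : Type} (f : V → W) : ∀ (l : List V) (i : ℕ),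
    (l.eraseIdx i).map f = (l.map f).eraseIdx i := by
  intro l
  induction l with
  | nil => intro i; simp
  | cons a t ih =>
    intro i
    cases i with
    | zero => simp
    | succ j => simp [List.eraseIdx_cons_succ, ih j]

lemma reg_of_map {V W : Type} (f : V → W) (l : List V) (h : Reg (l.map f)) : Reg l :=
  ((List.isChain_map f).1 h).imp fun _ _ hab e => hab (congrArg f e)

lemma chain'_iff_get_old {α : Type} {R : α → α → Prop} {l : List α} :
    List.Chain' R l ↔ ∀ (i : ℕ) (h : i < l.length - 1),
      R (l.get ⟨i, by omega⟩) (l.get ⟨i + 1, by omega⟩) := by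
  show List.IsChain R l ↔ _
  rw [List.isChain_iff_getElem]
  exact ⟨fun h i hi => h i (by omega), fun h i hi => h i (by omega)⟩

lemma eraseIdx_adj {W : Type} : ∀ (l : List W) (k : ℕ) (h : k + 1 < l.length),
    l[k] = l[k+1] → l.eraseIdx k = l.eraseIdx (k+1)
  | a :: t, 0, h, he => by
      cases t with
      | nil => simp at h
      | cons b s =>
        simp only [List.getElem_cons_zero, List.getElem_cons_succ, List.getElem_cons_zero] at he
        simp [he]
  | a :: t, k+1, h, he => by
      rw [List.eraseIdx_cons_succ, List.eraseIdx_cons_succ,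
        eraseIdx_adj t k (by simpa using h) (by simpa using he)]

lemma not_reg_eraseIdx {W : Type} (l : List W) (k j : ℕ) (hk : k + 1 < l.length)
    (he : l[k] = l[k+1]) (hjk : j ≠ k) (hjk1 : j ≠ k + 1) (hj : j < l.length) :
    ¬ Reg (l.eraseIdx j) := by
  intro hreg
  rw [Reg, chain'_iff_get_old] at hreg
  have hlen : (l.eraseIdx j).length = l.length - 1 := by
    rw [List.length_eraseIdx]; simp [hj]
  rcases lt_or_gt_of_ne hjk with hlt | hgt
  · -- j < k
    obtain ⟨m, rfl⟩ : ∃ m, k = m + 1 := ⟨k - 1, by omega⟩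
    have h1 : m < (l.eraseIdx j).length - 1 := by omega
    have h2 := hreg m h1
    simp only [List.get_eq_getElem] at h2
    rw [List.getElem_eraseIdx, List.getElem_eraseIdx] at h2
    rw [dif_neg (by omega), dif_neg (by omega)] at h2
    exact h2 he
  · -- j > k + 1
    have h1 : k < (l.eraseIdx j).length - 1 := by omega
    have h2 := hreg k h1
    simp only [List.get_eq_getElem] at h2
    rw [List.getElem_eraseIdx, List.getElem_eraseIdx] at h2
    rw [dif_pos (by omega), dif_pos (by omega)] at h2
    exact h2 he

noncomputable def D (K : Type) [Field K] {W : Type} (l : List W) : List W →₀ K :=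
  ∑ q ∈ Finset.range l.length, ((-1 : K) ^ q) •
    (if Reg (l.eraseIdx q) then Finsupp.single (l.eraseIdx q) (1 : K) else 0)

lemma D_eq_zero (K : Type) [Field K] {W : Type} (l : List W) (hreg : ¬ Reg l) :
    D K l = 0 := by
  rw [Reg, chain'_iff_get_old] at hreg
  push_neg at hreg
  obtain ⟨k, hk, he⟩ := hreg
  simp only [List.get_eq_getElem, not_ne_iff] at he
  have hk' : k + 1 < l.length := by omega
  have herase := eraseIdx_adj l k hk' he
  rw [D]
  have hsub : ({k, k+1} : Finset ℕ) ⊆ Finset.range l.length := by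
    intro x hx
    simp only [Finset.mem_insert, Finset.mem_singleton] at hx
    simp only [Finset.mem_range]
    omega
  rw [← Finset.sum_subset hsub]
  · rw [Finset.sum_pair (by omega : k ≠ k+1), herase, ← add_smul,
      show ((-1:K)^k + (-1:K)^(k+1)) = 0 by rw [pow_succ]; ring, zero_smul]
  · intro x hxr hxp
    simp only [Finset.mem_range] at hxr
    simp only [Finset.mem_insert, Finset.mem_singleton, not_or] at hxp
    rw [if_neg (not_reg_eraseIdx l k x hk' he hxp.1 hxp.2 hxr), smul_zero]

lemma dReg_single (K : Type) [Field K] {V : Type} (p : List V) :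
    dReg K V (Finsupp.single p (1:K)) = if 2 ≤ p.length then D K p else 0 := by
  rw [dReg, Finsupp.lsum_single, LinearMap.toSpanSingleton_apply_one]
  split_ifs with h
  · rw [D]
    exact Fin.sum_univ_eq_sum_range
      (fun q => ((-1:K)^q) • (if Reg (p.eraseIdx q) then Finsupp.single (p.eraseIdx q) (1:K) else 0))
      p.length
  · rfl

lemma find_single (K : Type) [Field K] {V W : Type} (f : V → W) (p : List V) :
    find K f (Finsupp.single p (1:K)) =
      if Reg (p.map f) then Finsupp.single (p.map f) (1:K) else 0 := by
  rw [find, Finsupp.lsum_single, LinearMap.toSpanSingleton_apply_one]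

lemma find_D (K : Type) [Field K] {V W : Type} (f : V → W) (p : List V) :
    find K f (D K p) = D K (p.map f) := by
  simp only [D, map_sum, LinearMap.map_smul, List.length_map]
  refine Finset.sum_congr rfl fun q _ => ?_
  congr 1
  by_cases h1 : Reg (p.eraseIdx q)
  · rw [if_pos h1, find_single, map_eraseIdx]
  · rw [if_neg h1, map_zero, if_neg]
    intro h2
    exact h1 (reg_of_map f _ (by rwa [map_eraseIdx f p q]))

lemma dReg_find (K : Type) [Field K] {V W : Type} (f : V → W) :
    (dReg K W).comp (find K f) = (find K f).comp (dReg K V) := by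
  apply Finsupp.lhom_ext
  intro p b
  have hb : (Finsupp.single p b) = b • Finsupp.single p (1:K) := by
    rw [Finsupp.smul_single, smul_eq_mul, mul_one]
  rw [hb, map_smul, map_smul]
  congr 1
  simp only [LinearMap.comp_apply]
  rw [find_single, dReg_single]
  by_cases hr : Reg (p.map f)
  · rw [if_pos hr, dReg_single, List.length_map]
    split_ifs with h2
    · exact (find_D K f p).symm
    · rw [map_zero]
  · rw [if_neg hr, map_zero]
    split_ifs with h2
    · rw [find_D]
      exact (D_eq_zero K _ hr).symm
    · rw [map_zero]

lemma dReg_find_apply (K : Type) [Field K] {V W : Type} (f : V → W) (v : List V →₀ K) :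
    dReg K W (find K f v) = find K f (dReg K V v) :=
  LinearMap.congr_fun (dReg_find K f) v


lemma find_Asub (K : Type) [Field K] {V W : Type} (f : V → W) {P : Set (List V)}
    {S : Set (List W)} (hf : IsWeakMor P S f) (n : ℕ) :
    Asub K P n ≤ Submodule.comap (find K f) (Asub K S n) := by
  rw [Asub, Finsupp.supported_eq_span_single, Submodule.span_le]
  rintro _ ⟨p, ⟨hp, hlen, hreg⟩, rfl⟩
  simp only [SetLike.mem_coe, Submodule.mem_comap]
  rw [find_single]
  split_ifs with h
  · exact Finsupp.single_mem_supported K 1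
      ⟨(hf p hp).resolve_right (not_not_intro h), by simp [hlen], h⟩
  · exact Submodule.zero_mem _

lemma find_Omega (K : Type) [Field K] {V W : Type} (f : V → W) {P : Set (List V)}
    {S : Set (List W)} (hf : IsWeakMor P S f) (n : ℕ) (v : List V →₀ K)
    (hv : v ∈ OmegaSub K P n) : find K f v ∈ OmegaSub K S n := by
  obtain ⟨h1, h2⟩ := hv
  refine ⟨find_Asub K f hf n h1, Submodule.mem_comap.mpr ?_⟩
  rw [dReg_find_apply]
  exact find_Asub K f hf (n-1) (Submodule.mem_comap.mp h2)

end PH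

theorem statement8 (K : Type) [Field K] (V V' : Type) [Fintype V] [Fintype V']
    (P : PH.PathComplex V) (P' : PH.PathComplex V')
    (h0 : ∀ v : V, [v] ∈ P.carrier) (h0' : ∀ v : V', [v] ∈ P'.carrier)
    (f : V → V') (hf : PH.IsWeakMor P.carrier P'.carrier f) :
    -- f_* restricts to the ∂-invariant chains
    (∀ (n : ℕ) (v : List V →₀ K), v ∈ PH.OmegaSub K P.carrier n →
        PH.find K f v ∈ PH.OmegaSub K P'.carrier n) ∧
    -- f_* : Ω_*(P) → Ω_*(P') is a chain map
    (∀ (n : ℕ) (v : List V →₀ K), v ∈ PH.OmegaSub K P.carrier n →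
        PH.dReg K V' (PH.find K f v) = PH.find K f (PH.dReg K V v)) ∧
    -- hence f induces homomorphisms on path homology, sending [z] to [f_* z]
    (∀ n : ℕ, ∃ h : PH.Hsm K P.carrier n →ₗ[K] PH.Hsm K P'.carrier n,
      ∀ (z : List V →₀ K) (hz : z ∈ PH.Zsub K P.carrier n)
        (hz' : PH.find K f z ∈ PH.Zsub K P'.carrier n),
        h ⟨(PH.Bsub K P.carrier n).mkQ z, Submodule.mem_map_of_mem hz⟩ =
          ⟨(PH.Bsub K P'.carrier n).mkQ (PH.find K f z),
            Submodule.mem_map_of_mem hz'⟩) := by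
  
  have hOmega : ∀ (n : ℕ) (v : List V →₀ K), v ∈ PH.OmegaSub K P.carrier n →
      PH.find K f v ∈ PH.OmegaSub K P'.carrier n :=
    fun n v hv => PH.find_Omega K f hf n v hv
  refine ⟨hOmega, fun n v _ => PH.dReg_find_apply K f v, fun n => ?_⟩
  have hB : PH.Bsub K P.carrier n ≤ (PH.Bsub K P'.carrier n).comap (PH.find K f) := by
    rintro _ ⟨w, hw, rfl⟩
    simp only [Submodule.mem_comap]
    rw [← PH.dReg_find_apply]
    exact ⟨PH.find K f w, hOmega _ w hw, rfl⟩
  have hZ : ∀ z ∈ PH.Zsub K P.carrier n, PH.find K f z ∈ PH.Zsub K P'.carrier n := by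
    rintro z ⟨hz1, hz2⟩
    refine ⟨hOmega n z hz1, LinearMap.mem_ker.mpr ?_⟩
    rw [PH.dReg_find_apply, LinearMap.mem_ker.mp hz2, map_zero]
  set F := Submodule.mapQ (PH.Bsub K P.carrier n) (PH.Bsub K P'.carrier n) (PH.find K f) hB
    with hF
  have hH : ∀ x ∈ PH.Hsm K P.carrier n, F x ∈ PH.Hsm K P'.carrier n := by
    rintro _ ⟨z, hz, rfl⟩
    refine ⟨PH.find K f z, hZ z hz, ?_⟩
    simp only [hF, Submodule.mkQ_apply, Submodule.mapQ_apply]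
  refine ⟨F.restrict hH, fun z hz hz' => ?_⟩
  apply Subtype.ext
  rw [LinearMap.restrict_apply]
  simp only [hF, Submodule.mkQ_apply, Submodule.mapQ_apply]
end

section
/- For any path complex P on a finite set V, any field K, and any n ≥ 1, the n-th path homology of P coincides with that of the sub-path complex generated by its n- and (n+1)-paths: H_n(P) ≅ H_n(Δ(P_n ∪ P_{n+1})), where Δ(A) is the closure of the set of paths A under front and back truncation. -/
/-!
STATEMENT 12: For any path complex P on a finite set V, any field K, and any n ≥ 1, the
n-th path homology of P coincides with that of the sub-path complex generated by its
n- and (n+1)-paths: H_n(P) ≅ H_n(Δ(P_n ∪ P_{n+1})), where Δ(A) is the closure of A under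
front and back truncation (equivalently, the set of non-empty contiguous subwords of the
paths in A).
-/

open scoped Classical

namespace PH

/-- Δ(A): the path complex generated by a set A of elementary paths, i.e. the closure of
A under the truncations i₀…iₙ ↦ i₀…i_{n−1} and i₀…iₙ ↦ i₁…iₙ; concretely, the set of
non-empty infix subwords of paths in A. -/
def genPC {V : Type} (A : Set (List V)) : PathComplex V where
  carrier := {q | q ≠ [] ∧ ∃ p ∈ A, q <:+: p}
  not_nil := fun p hp => hp.1
  dropLast_mem := by
    rintro p ⟨hne, q, hq, hinf⟩ hlen
    refine ⟨?_, q, hq, (List.dropLast_prefix p).isInfix.trans hinf⟩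
    have : 0 < p.dropLast.length := by
      rw [List.length_dropLast]; omega
    exact List.length_pos_iff.mp this
  tail_mem := by
    rintro p ⟨hne, q, hq, hinf⟩ hlen
    refine ⟨?_, q, hq, (List.tail_suffix p).isInfix.trans hinf⟩
    have : 0 < p.tail.length := by
      rw [List.length_tail]; omega
    exact List.length_pos_iff.mp this

end PH

namespace PH

/-- Any nonempty infix of a member of a path complex is a member. -/
lemma infix_mem {V : Type} (P : PathComplex V) :
    ∀ N p, p.length = N → p ∈ P.carrier → ∀ q, q ≠ [] → q <:+: p → q ∈ P.carrier := by
  intro N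
  induction N using Nat.strong_induction_on with
  | _ N ih =>
  rintro p hlen hp q hq ⟨s, t, hst⟩
  by_cases hqp : q = p
  · exact hqp ▸ hp
  rcases eq_or_ne t [] with rfl | ht
  · have hs : s ≠ [] := by
      rintro rfl; simp at hst; exact hqp hst
    have h2 : 2 ≤ p.length := by
      have := List.length_pos_iff.mpr hs
      have := List.length_pos_iff.mpr hq
      subst hst; simp; omega
    have htail : p.tail = s.tail ++ q := by
      subst hst; simp [List.tail_append_of_ne_nil hs]
    have hNpos : 1 ≤ N := by omega
    refine ih (N - 1) (by omega) p.tail (by rw [List.length_tail]; omega)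
      (P.tail_mem p hp h2) q hq ⟨s.tail, [], by simp [htail]⟩
  · have h2 : 2 ≤ p.length := by
      have := List.length_pos_iff.mpr ht
      have := List.length_pos_iff.mpr hq
      subst hst; simp; omega
    have hdl : p.dropLast = s ++ q ++ t.dropLast := by
      subst hst; rw [List.dropLast_append_of_ne_nil ht]
    refine ih (N - 1) (by omega) p.dropLast (by rw [List.length_dropLast]; omega)
      (P.dropLast_mem p hp h2) q hq ⟨s, t.dropLast, by simp [hdl]⟩

lemma Zsub_eq_inf (K : Type) [Field K] {V : Type} (P : Set (List V)) (n : ℕ) :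
    Zsub K P n = Asub K P n ⊓ LinearMap.ker (dReg K V) := by
  ext v
  simp only [Zsub, OmegaSub, Submodule.mem_inf, Submodule.mem_comap, LinearMap.mem_ker]
  constructor
  · rintro ⟨⟨h1, _⟩, h3⟩; exact ⟨h1, h3⟩
  · rintro ⟨h1, h3⟩; exact ⟨⟨h1, by rw [h3]; exact (Asub K P (n - 1)).zero_mem⟩, h3⟩

lemma hsm_congr {K : Type} [Field K] {M : Type} [AddCommGroup M] [Module K M]
    {B B' Z Z' : Submodule K M} (hB : B = B') (hZ : Z = Z') :
    Nonempty ((Submodule.map B.mkQ Z) ≃ₗ[K] (Submodule.map B'.mkQ Z')) := by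
  subst hB; subst hZ; exact ⟨LinearEquiv.refl _ _⟩

end PH

theorem statement12 (K : Type) [Field K] (V : Type) [Fintype V]
    (P : PH.PathComplex V) (n : ℕ) (hn : 1 ≤ n) :
    Nonempty ((PH.Hsm K P.carrier n) ≃ₗ[K]
      (PH.Hsm K (PH.genPC
        {l | l ∈ P.carrier ∧ (l.length = n + 1 ∨ l.length = n + 2)}).carrier n)) := by
  set A : Set (List V) := {l | l ∈ P.carrier ∧ (l.length = n + 1 ∨ l.length = n + 2)} with hAdef
  set Q : PH.PathComplex V := PH.genPC A with hQdef
  have hset : ∀ m : ℕ, (m = n + 1 ∨ m = n + 2) →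
      {l : List V | l ∈ Q.carrier ∧ l.length = m ∧ PH.Reg l}
        = {l : List V | l ∈ P.carrier ∧ l.length = m ∧ PH.Reg l} := by
    intro m hm
    ext l
    simp only [Set.mem_setOf_eq]
    constructor
    · rintro ⟨⟨hne, p, hpA, hinf⟩, hlen, hreg⟩
      exact ⟨PH.infix_mem P p.length p rfl hpA.1 l hne hinf, hlen, hreg⟩
    · rintro ⟨hl, hlen, hreg⟩
      have hne : l ≠ [] := by rintro rfl; simp at hlen; omega
      exact ⟨⟨hne, l, ⟨hl, by omega⟩, List.infix_refl l⟩, hlen, hreg⟩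
  have hA1 : PH.Asub K Q.carrier n = PH.Asub K P.carrier n := by
    unfold PH.Asub; rw [hset (n + 1) (Or.inl rfl)]
  have hA2 : PH.Asub K Q.carrier (n + 1) = PH.Asub K P.carrier (n + 1) := by
    unfold PH.Asub; rw [hset (n + 2) (Or.inr rfl)]
  have hB : PH.Bsub K Q.carrier n = PH.Bsub K P.carrier n := by
    unfold PH.Bsub PH.OmegaSub
    rw [hA2]
    have : n + 1 - 1 = n := rfl
    rw [this, hA1]
  have hZ : PH.Zsub K Q.carrier n = PH.Zsub K P.carrier n := by
    rw [PH.Zsub_eq_inf, PH.Zsub_eq_inf, hA1]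
  unfold PH.Hsm
  exact PH.hsm_congr hB.symm hZ.symm
end
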